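/- arXiv:math/0502212 — 7 statements merged into one kernel-verified Lean document; each statement's English description precedes it below -/
import Mathlib

section
/- Let C be a small category and let F be an automorphism of C which is special, i.e. F(A) is isomorphic to A for every object A of C. Then F can be represented in the form F = F0 ∘ F1, where F0 is an inner automorphism of C (an automorphism naturally isomorphic to the identity functor) and F1 is an automorphism of C satisfying F1(A) = A for every object A of C. -/
open CategoryTheory

universe u

section Aux

variable {C : Type u} [SmallCategory C] (F G : C ⥤ C)
  (hFG : F ⋙ G = 𝟭 C) (hGF : G ⋙ F = 𝟭 C)
  (η : ∀ A : C, F.obj A ≅ A)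

/-- The object-fixing part. -/
def specialF1 : C ⥤ C where
  obj A := A
  map {A B} f := (η A).inv ≫ F.map f ≫ (η B).hom
  map_id A := by simp
  map_comp f g := by simp

/-- Inverse of `specialF1`. -/
def specialG1 : C ⥤ C where
  obj A := A
  map {A B} f := eqToHom (Functor.congr_obj hFG A).symm ≫
    G.map ((η A).hom ≫ f ≫ (η B).inv) ≫ eqToHom (Functor.congr_obj hFG B)
  map_id A := by simp
  map_comp {A B D} f g := by
    simp only [Category.assoc, eqToHom_trans_assoc, eqToHom_refl, Category.id_comp,
      ← Functor.map_comp_assoc, Iso.inv_hom_id_assoc]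

theorem specialF1G1 : specialF1 F η ⋙ specialG1 F G hFG η = 𝟭 C := by
  refine CategoryTheory.Functor.ext (fun A => rfl) (fun A B f => ?_)
  have h : ∀ {X Y : C} (x : X ⟶ Y), G.map (F.map x) =
      eqToHom (Functor.congr_obj hFG X) ≫ x ≫ eqToHom (Functor.congr_obj hFG Y).symm :=
    fun x => by simpa using Functor.congr_hom hFG x
  simp only [Functor.comp_map, Functor.id_map]
  simp [specialF1, specialG1, h]
  have key : ∀ (X Y : C) (p : X = X) (q : Y = Y) (g : X ⟶ Y), g = eqToHom p ≫ g ≫ eqToHom q :=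
    fun X Y p q g => by simp
  exact key _ _ _ _ f

theorem specialG1F1 (hGF : G ⋙ F = 𝟭 C) :
    specialG1 F G hFG η ⋙ specialF1 F η = 𝟭 C := by
  refine CategoryTheory.Functor.ext (fun A => rfl) (fun A B f => ?_)
  have h : ∀ {X Y : C} (x : X ⟶ Y), F.map (G.map x) =
      eqToHom (Functor.congr_obj hGF X) ≫ x ≫ eqToHom (Functor.congr_obj hGF Y).symm :=
    fun x => by simpa using Functor.congr_hom hGF x
  simp only [Functor.comp_map, Functor.id_map]
  simp [specialF1, specialG1, eqToHom_map, h]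
  have key : ∀ (X Y : C) (p : X = X) (q : Y = Y) (g : X ⟶ Y), g = eqToHom p ≫ g ≫ eqToHom q :=
    fun X Y p q g => by simp
  exact key _ _ _ _ f

end Aux

/-- Every special automorphism `F` of a small category `C` (i.e. an invertible
endofunctor with `F.obj A ≅ A` for every object `A`) factors as `F = F0 ∘ F1` where `F0` is an
inner automorphism (naturally isomorphic to the identity functor) and `F1` is an automorphism
fixing every object. -/
theorem special_automorphism_factorization
    {C : Type u} [SmallCategory C] (F G : C ⥤ C)
    (hFG : F ⋙ G = 𝟭 C) (hGF : G ⋙ F = 𝟭 C)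
    (hspecial : ∀ A : C, Nonempty (F.obj A ≅ A)) :
    ∃ F0 F1 : C ⥤ C,
      (∃ G0 : C ⥤ C, F0 ⋙ G0 = 𝟭 C ∧ G0 ⋙ F0 = 𝟭 C) ∧
      (∃ G1 : C ⥤ C, F1 ⋙ G1 = 𝟭 C ∧ G1 ⋙ F1 = 𝟭 C) ∧
      Nonempty (F0 ≅ 𝟭 C) ∧
      (∀ A : C, F1.obj A = A) ∧
      F = F1 ⋙ F0 := by
  have η : ∀ A : C, F.obj A ≅ A := fun A => (hspecial A).some
  refine ⟨specialG1 F G hFG η ⋙ F, specialF1 F η,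
    ⟨G ⋙ specialF1 F η, ?_, ?_⟩,
    ⟨specialG1 F G hFG η, specialF1G1 F G hFG η, specialG1F1 F G hFG η hGF⟩,
    ⟨NatIso.ofComponents (fun A => η A) ?_⟩, fun A => rfl, ?_⟩
  · calc (specialG1 F G hFG η ⋙ F) ⋙ G ⋙ specialF1 F η
        = specialG1 F G hFG η ⋙ (F ⋙ G) ⋙ specialF1 F η := rfl
      _ = specialG1 F G hFG η ⋙ specialF1 F η := by rw [hFG]; rfl
      _ = 𝟭 C := specialG1F1 F G hFG η hGF
  · calc (G ⋙ specialF1 F η) ⋙ specialG1 F G hFG η ⋙ F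
        = G ⋙ (specialF1 F η ⋙ specialG1 F G hFG η) ⋙ F := rfl
      _ = G ⋙ F := by rw [specialF1G1]; rfl
      _ = 𝟭 C := hGF
  · intro A B f
    have h : ∀ {X Y : C} (x : X ⟶ Y), F.map (G.map x) =
        eqToHom (Functor.congr_obj hGF X) ≫ x ≫ eqToHom (Functor.congr_obj hGF Y).symm :=
      fun x => by simpa using Functor.congr_hom hGF x
    simp only [Functor.comp_map, Functor.id_map]
    simp [specialG1, eqToHom_map, h]
  · calc F = 𝟭 C ⋙ F := rfl
      _ = (specialF1 F η ⋙ specialG1 F G hFG η) ⋙ F := by rw [specialF1G1]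
      _ = specialF1 F η ⋙ specialG1 F G hFG η ⋙ F := rfl
end

section
/- Let K be a left noetherian ring with unit and let C0 denote the category whose objects are the finitely generated free left K-modules and whose morphisms are the K-linear maps. Let φ be an automorphism of C0 which fixes every object. For α ∈ K let ν_α be the endomorphism of the rank-one free module Kx0 determined by ν_α(x0) = α·x0, and let σ : K → K be the bijection determined by φ(ν_α) = ν_{σ(α)}. Then σ is a ring automorphism of K; in particular σ is additive: σ(α + β) = σ(α) + σ(β) for all α, β ∈ K. -/
open CategoryTheory

universe u

/-- The category `C0` of finitely generated free left `K`-modules, realized as the full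
subcategory of `ModuleCat K` on the modules that are finite and free. -/
def FreeModCat (K : Type u) [Ring K] : Type (u + 1) :=
  CategoryTheory.ObjectProperty.FullSubcategory
    (fun M : ModuleCat.{u} K => Module.Finite K M ∧ Module.Free K M)

instance (K : Type u) [Ring K] : Category (FreeModCat K) :=
  CategoryTheory.ObjectProperty.FullSubcategory.category _

/-- The rank-one free module `K·x₀` (that is, `K` as a left module over itself) as an object of
the category of finitely generated free left `K`-modules. -/
def KxObj (K : Type u) [Ring K] : FreeModCat K :=
  ⟨ModuleCat.of K K, ⟨inferInstanceAs (Module.Finite K K), inferInstanceAs (Module.Free K K)⟩⟩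

/-- The endomorphism `ν_α` of `K·x₀` determined by `ν_α (x₀) = α • x₀`; concretely it is right
multiplication by `α`. -/
def nuHom (K : Type u) [Ring K] (α : K) : KxObj K ⟶ KxObj K :=
  ObjectProperty.homMk (ModuleCat.ofHom (show K →ₗ[K] K from
    { toFun := fun v => v * α
      map_add' := fun u v => by simp [add_mul]
      map_smul' := fun l v => by simp [smul_eq_mul, mul_assoc] }))

/-! ### Auxiliary definitions and lemmas -/

section Aux

variable {K : Type u} [Ring K]

/-- The rank-two free module `K × K` as an object of `FreeModCat K`. -/
def N2 (K : Type u) [Ring K] : FreeModCat K :=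
  ⟨ModuleCat.of K (K × K),
    ⟨inferInstanceAs (Module.Finite K (K × K)), inferInstanceAs (Module.Free K (K × K))⟩⟩

/-- View an endomorphism of `K·x₀` as a linear map. -/
def homKK (f : KxObj K ⟶ KxObj K) : K →ₗ[K] K := f.hom.hom
/-- View a morphism `K·x₀ ⟶ K²` as a linear map. -/
def homKN (f : KxObj K ⟶ N2 K) : K →ₗ[K] K × K := f.hom.hom
/-- View a morphism `K² ⟶ K·x₀` as a linear map. -/
def homNK (f : N2 K ⟶ KxObj K) : K × K →ₗ[K] K := f.hom.hom
/-- View an endomorphism of `K²` as a linear map. -/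
def homNN (f : N2 K ⟶ N2 K) : K × K →ₗ[K] K × K := f.hom.hom

/-- Left inclusion `K → K × K`. -/
def iL (K : Type u) [Ring K] : KxObj K ⟶ N2 K := ObjectProperty.homMk (ModuleCat.ofHom (show K →ₗ[K] K × K from LinearMap.inl K K K))

/-- Right inclusion `K → K × K`. -/
def iR (K : Type u) [Ring K] : KxObj K ⟶ N2 K := ObjectProperty.homMk (ModuleCat.ofHom (show K →ₗ[K] K × K from LinearMap.inr K K K))

/-- First projection `K × K → K`. -/
def qL (K : Type u) [Ring K] : N2 K ⟶ KxObj K := ObjectProperty.homMk (ModuleCat.ofHom (show K × K →ₗ[K] K from LinearMap.fst K K K))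

/-- Second projection `K × K → K`. -/
def qR (K : Type u) [Ring K] : N2 K ⟶ KxObj K := ObjectProperty.homMk (ModuleCat.ofHom (show K × K →ₗ[K] K from LinearMap.snd K K K))

/-- Diagonal `K → K × K`. -/
def dg (K : Type u) [Ring K] : KxObj K ⟶ N2 K :=
  ObjectProperty.homMk (ModuleCat.ofHom (show K →ₗ[K] K × K from LinearMap.prod LinearMap.id LinearMap.id))

/-- The map `(u, v) ↦ u·α + v·β`. -/
def sm (K : Type u) [Ring K] (α β : K) : N2 K ⟶ KxObj K :=
  ObjectProperty.homMk (ModuleCat.ofHom (show K × K →ₗ[K] K from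
    { toFun := fun p => p.1 * α + p.2 * β
      map_add' := fun u v => by simp [add_mul]; abel
      map_smul' := fun l v => by simp [smul_eq_mul, mul_assoc, mul_add] }))

lemma homext {A B : FreeModCat K} {f g : A ⟶ B} (h : f.hom.hom = g.hom.hom) : f = g :=
  InducedCategory.hom_ext (ModuleCat.hom_ext h)

lemma iL_qL : iL K ≫ qL K = 𝟙 (KxObj K) := homext (LinearMap.ext fun (x : K) => rfl)
lemma iR_qR : iR K ≫ qR K = 𝟙 (KxObj K) := homext (LinearMap.ext fun (x : K) => rfl)
lemma iL_qR : iL K ≫ qR K = nuHom K 0 :=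
  homext <| LinearMap.ext fun (x : K) => by show (0 : K) = x * 0; simp
lemma iR_qL : iR K ≫ qL K = nuHom K 0 :=
  homext <| LinearMap.ext fun (x : K) => by show (0 : K) = x * 0; simp
lemma dg_qL : dg K ≫ qL K = 𝟙 (KxObj K) := homext (LinearMap.ext fun (x : K) => rfl)
lemma dg_qR : dg K ≫ qR K = 𝟙 (KxObj K) := homext (LinearMap.ext fun (x : K) => rfl)
lemma iL_sm (α β : K) : iL K ≫ sm K α β = nuHom K α :=
  homext <| LinearMap.ext fun (x : K) => by show x * α + 0 * β = x * α; simp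
lemma iR_sm (α β : K) : iR K ≫ sm K α β = nuHom K β :=
  homext <| LinearMap.ext fun (x : K) => by show 0 * α + x * β = x * β; simp
lemma dg_sm (α β : K) : dg K ≫ sm K α β = nuHom K (α + β) :=
  homext <| LinearMap.ext fun (x : K) => by show x * α + x * β = x * (α + β); rw [mul_add]
lemma nu_comp (α β : K) : nuHom K α ≫ nuHom K β = nuHom K (α * β) :=
  homext <| LinearMap.ext fun (x : K) => mul_assoc x α β

/-- `iL`, `iR` are jointly epimorphic. -/
lemma joint_epi {Z : FreeModCat K} (u v : N2 K ⟶ Z) (h1 : iL K ≫ u = iL K ≫ v)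
    (h2 : iR K ≫ u = iR K ≫ v) : u = v := by
  apply homext
  apply LinearMap.ext
  rintro ⟨x, y⟩
  have e1 := LinearMap.congr_fun (congrArg (fun f => f.hom.hom) h1) x
  have e2 := LinearMap.congr_fun (congrArg (fun f => f.hom.hom) h2) y
  rw [show ((x, y) : K × K) = (x, 0) + (0, y) by simp]
  exact (map_add u.hom.hom (x, 0) (0, y)).trans
    ((congrArg₂ (· + ·) e1 e2).trans (map_add v.hom.hom (x, 0) (0, y)).symm)

/-- Conjugating the action of an object-fixing functor on morphisms so that it becomes a
family of maps `(A ⟶ B) → (A ⟶ B)`. -/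
def conjMap (φ : FreeModCat K ⥤ FreeModCat K) (hfix : ∀ A, φ.obj A = A)
    {A B : FreeModCat K} (f : A ⟶ B) : A ⟶ B :=
  eqToHom (hfix A).symm ≫ φ.map f ≫ eqToHom (hfix B)

lemma conj_comp (φ : FreeModCat K ⥤ FreeModCat K) (hfix : ∀ A, φ.obj A = A)
    {A B C : FreeModCat K} (f : A ⟶ B) (g : B ⟶ C) :
    conjMap φ hfix (f ≫ g) = conjMap φ hfix f ≫ conjMap φ hfix g := by
  simp [conjMap]

lemma conj_id (φ : FreeModCat K ⥤ FreeModCat K) (hfix : ∀ A, φ.obj A = A)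
    (A : FreeModCat K) : conjMap φ hfix (𝟙 A) = 𝟙 A := by
  simp [conjMap]

lemma conj_conj (φ ψ : FreeModCat K ⥤ FreeModCat K)
    (hφψ : φ ⋙ ψ = 𝟭 (FreeModCat K))
    (hfixφ : ∀ A, φ.obj A = A) (hfixψ : ∀ A, ψ.obj A = A)
    {A B : FreeModCat K} (f : A ⟶ B) :
    conjMap ψ hfixψ (conjMap φ hfixφ f) = f := by
  have h := Functor.congr_hom hφψ f
  simp only [Functor.comp_map, Functor.id_map] at h
  simp [conjMap, eqToHom_map, h]

end Aux

/-- Let `K` be a left noetherian ring, `φ` an automorphism of the category of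
finitely generated free left `K`-modules fixing every object, and `σ : K → K` the bijection
determined by `φ(ν_α) = ν_{σ α}`.  Then `σ` is a ring automorphism of `K` (in particular, `σ` is
additive). -/
theorem object_fixing_automorphism_induces_ring_automorphism
    (K : Type u) [Ring K] [IsNoetherianRing K]
    (φ ψ : FreeModCat K ⥤ FreeModCat K)
    (hφψ : φ ⋙ ψ = 𝟭 (FreeModCat K)) (hψφ : ψ ⋙ φ = 𝟭 (FreeModCat K))
    (hfix : ∀ A : FreeModCat K, φ.obj A = A)
    (σ : K → K) (hσbij : Function.Bijective σ)
    (hσ : ∀ α : K, φ.map (nuHom K α) =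
      eqToHom (hfix (KxObj K)) ≫ nuHom K (σ α) ≫ eqToHom (hfix (KxObj K)).symm) :
    ∃ ρ : K ≃+* K, ∀ α : K, ρ α = σ α := by
  -- ψ also fixes every object
  have hfixψ : ∀ A : FreeModCat K, ψ.obj A = A := by
    intro A
    have h1 : ψ.obj (φ.obj A) = A := Functor.congr_obj hφψ A
    rwa [hfix A] at h1
  -- the conjugated action of φ sends ν_α to ν_{σ α}
  have hΦν : ∀ α : K, conjMap φ hfix (nuHom K α) = nuHom K (σ α) := by
    intro α
    simp [conjMap, hσ α]
  -- injectivity of α ↦ ν_α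
  have hν_inj : ∀ a b : K, nuHom K a = nuHom K b → a = b := by
    intro a b h
    have h1 : homKK (nuHom K a) 1 = homKK (nuHom K b) 1 :=
      LinearMap.congr_fun (congrArg homKK h) 1
    rwa [show homKK (nuHom K a) 1 = a from one_mul a,
      show homKK (nuHom K b) 1 = b from one_mul b] at h1
  -- multiplicativity
  have hmul : ∀ a b : K, σ (a * b) = σ a * σ b := by
    intro a b
    apply hν_inj
    rw [← hΦν, ← nu_comp, conj_comp, hΦν, hΦν, nu_comp]
  -- σ 0 = 0
  have hσ0 : σ 0 = 0 := by
    obtain ⟨x, hx⟩ := hσbij.2 0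
    have := hmul x 0
    rwa [mul_zero, hx, zero_mul] at this
  -- σ 1 = 1
  have hσ1 : σ 1 = 1 := by
    apply hν_inj
    have h1 : nuHom K (1 : K) = 𝟙 (KxObj K) := homext <| LinearMap.ext fun (x : K) => mul_one x
    rw [← hΦν, h1, conj_id]
  -- notation for conjugated images
  set j1 : KxObj K ⟶ N2 K := conjMap φ hfix (iL K) with hj1
  set j2 : KxObj K ⟶ N2 K := conjMap φ hfix (iR K) with hj2
  set r1 : N2 K ⟶ KxObj K := conjMap φ hfix (qL K) with hr1
  set r2 : N2 K ⟶ KxObj K := conjMap φ hfix (qR K) with hr2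
  have hj1r1 : j1 ≫ r1 = 𝟙 (KxObj K) := by rw [hj1, hr1, ← conj_comp, iL_qL, conj_id]
  have hj2r2 : j2 ≫ r2 = 𝟙 (KxObj K) := by rw [hj2, hr2, ← conj_comp, iR_qR, conj_id]
  have hj1r2 : j1 ≫ r2 = nuHom K 0 := by
    rw [hj1, hr2, ← conj_comp, iL_qR, hΦν, hσ0]
  have hj2r1 : j2 ≫ r1 = nuHom K 0 := by
    rw [hj2, hr1, ← conj_comp, iR_qL, hΦν, hσ0]
  -- the endomorphism of K² built from j's and r's
  set e : N2 K ⟶ N2 K :=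
    ObjectProperty.homMk (ModuleCat.ofHom
      ((homKN j1).comp (homNK r1) + (homKN j2).comp (homNK r2) : K × K →ₗ[K] K × K)) with he_def
  have he_apply : ∀ w : K × K,
      homNN e w = homKN j1 (homNK r1 w) + homKN j2 (homNK r2 w) := fun w => rfl
  -- joint epi for j1, j2 (transfer along ψ)
  have joint_epi_j : ∀ {Z : FreeModCat K} (u v : N2 K ⟶ Z),
      j1 ≫ u = j1 ≫ v → j2 ≫ u = j2 ≫ v → u = v := by
    intro Z u v h1 h2
    have k1 : conjMap ψ hfixψ (j1 ≫ u) = conjMap ψ hfixψ (j1 ≫ v) := by rw [h1]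
    have k2 : conjMap ψ hfixψ (j2 ≫ u) = conjMap ψ hfixψ (j2 ≫ v) := by rw [h2]
    rw [conj_comp, conj_comp, hj1, conj_conj φ ψ hφψ hfix hfixψ] at k1
    rw [conj_comp, conj_comp, hj2, conj_conj φ ψ hφψ hfix hfixψ] at k2
    have huv : conjMap ψ hfixψ u = conjMap ψ hfixψ v := joint_epi _ _ k1 k2
    have h3 := congrArg (conjMap φ hfix) huv
    rwa [conj_conj ψ φ hψφ hfixψ hfix, conj_conj ψ φ hψφ hfixψ hfix] at h3
  -- e is the identity of K²
  have he : e = 𝟙 (N2 K) := by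
    apply joint_epi_j
    · rw [Category.comp_id]
      apply homext
      apply LinearMap.ext
      intro (x : K)
      have A1 : homNK r1 (homKN j1 x) = x :=
        LinearMap.congr_fun (congrArg homKK hj1r1) x
      have A2 : homNK r2 (homKN j1 x) = x * 0 :=
        LinearMap.congr_fun (congrArg homKK hj1r2) x
      show homNN e (homKN j1 x) = homKN j1 x
      rw [he_apply, A1, A2, mul_zero, map_zero, add_zero]
    · rw [Category.comp_id]
      apply homext
      apply LinearMap.ext
      intro (x : K)
      have A1 : homNK r1 (homKN j2 x) = x * 0 :=
        LinearMap.congr_fun (congrArg homKK hj2r1) x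
      have A2 : homNK r2 (homKN j2 x) = x :=
        LinearMap.congr_fun (congrArg homKK hj2r2) x
      show homNN e (homKN j2 x) = homKN j2 x
      rw [he_apply, A1, A2, mul_zero, map_zero, zero_add]
  -- additivity
  have hadd : ∀ a b : K, σ (a + b) = σ a + σ b := by
    intro a b
    set Φd : KxObj K ⟶ N2 K := conjMap φ hfix (dg K) with hΦd
    set Φs : N2 K ⟶ KxObj K := conjMap φ hfix (sm K a b) with hΦs
    have key : nuHom K (σ (a + b)) = Φd ≫ Φs := by
      rw [hΦd, hΦs, ← conj_comp, dg_sm, hΦν]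
    -- evaluate both sides at 1
    have hval : σ (a + b) = homKK (Φd ≫ Φs) 1 := by
      have := LinearMap.congr_fun (congrArg homKK key) 1
      rwa [show homKK (nuHom K (σ (a+b))) 1 = σ (a+b) from one_mul _] at this
    set w : K × K := homKN Φd 1 with hw
    have hcompeval : homKK (Φd ≫ Φs) 1 = homNK Φs w := rfl
    have hr1w : homNK r1 w = 1 := by
      have h4 : Φd ≫ r1 = 𝟙 (KxObj K) := by
        rw [hΦd, hr1, ← conj_comp, dg_qL, conj_id]
      exact LinearMap.congr_fun (congrArg homKK h4) 1
    have hr2w : homNK r2 w = 1 := by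
      have h4 : Φd ≫ r2 = 𝟙 (KxObj K) := by
        rw [hΦd, hr2, ← conj_comp, dg_qR, conj_id]
      exact LinearMap.congr_fun (congrArg homKK h4) 1
    have hwsum : w = homKN j1 1 + homKN j2 1 := by
      have h5 : homNN e w = w := LinearMap.congr_fun (congrArg homNN he) w
      rw [← h5, he_apply, hr1w, hr2w]
    have hj1s : homNK Φs (homKN j1 1) = σ a := by
      have h6 : j1 ≫ Φs = nuHom K (σ a) := by
        rw [hj1, hΦs, ← conj_comp, iL_sm, hΦν]
      have := LinearMap.congr_fun (congrArg homKK h6) 1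
      rwa [show homKK (nuHom K (σ a)) 1 = σ a from one_mul _] at this
    have hj2s : homNK Φs (homKN j2 1) = σ b := by
      have h6 : j2 ≫ Φs = nuHom K (σ b) := by
        rw [hj2, hΦs, ← conj_comp, iR_sm, hΦν]
      have := LinearMap.congr_fun (congrArg homKK h6) 1
      rwa [show homKK (nuHom K (σ b)) 1 = σ b from one_mul _] at this
    rw [hval, hcompeval, hwsum, map_add, hj1s, hj2s]
  -- assemble the ring equivalence
  exact ⟨{ Equiv.ofBijective σ hσbij with map_mul' := hmul, map_add' := hadd }, fun α => rfl⟩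
end

section
/- Let K be a left noetherian ring with unit and let C0 denote the category whose objects are the finitely generated free left K-modules and whose morphisms are the K-linear maps. Then every automorphism φ of C0 is semi-inner: there exist a ring automorphism σ of K and, for every object A of C0, a σ-semilinear bijection s_A : A → φ(A), such that φ(ν) = s_B ∘ ν ∘ s_A^{-1} for every K-linear map ν : A → B. -/
open CategoryTheory

universe u

namespace FreeModAux
variable {K : Type u} [Ring K]

instance {A B : FreeModCat K} : FunLike (A ⟶ B) A.obj B.obj where
  coe f := f.hom.hom
  coe_injective f g h :=
    InducedCategory.hom_ext (ModuleCat.hom_ext (LinearMap.ext (congrFun h)))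
instance {A B : FreeModCat K} : LinearMapClass (A ⟶ B) K A.obj B.obj where
  map_add f := map_add f.hom.hom
  map_smulₛₗ f := map_smul f.hom.hom
def homLEquiv {A B : FreeModCat K} : (A ⟶ B) ≃ (A.obj →ₗ[K] B.obj) where
  toFun f := f.hom.hom
  invFun f := ObjectProperty.homMk (ModuleCat.ofHom f)
  left_inv _ := rfl
  right_inv _ := rfl
instance {A B : FreeModCat K} : AddCommGroup (A ⟶ B) := homLEquiv.addCommGroup

lemma hom_ext {A B : FreeModCat K} {f g : A ⟶ B} (h : ∀ x, f x = g x) : f = g :=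
  InducedCategory.hom_ext (ModuleCat.hom_ext (LinearMap.ext h))

def KO (K : Type u) [Ring K] : FreeModCat K :=
  ⟨ModuleCat.of K K, ⟨inferInstanceAs (Module.Finite K K), inferInstanceAs (Module.Free K K)⟩⟩

def mkHom {A B : FreeModCat K} (f : A.obj →ₗ[K] B.obj) : A ⟶ B :=
  ObjectProperty.homMk (ModuleCat.ofHom f)

@[simp] lemma comp_apply' {A B C : FreeModCat K} (f : A ⟶ B) (g : B ⟶ C) (x : A.obj) :
    (f ≫ g) x = g (f x) := rfl

@[simp] lemma id_apply' {A : FreeModCat K} (x : A.obj) : (𝟙 A : A ⟶ A) x = x := rfl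

@[simp] lemma zero_apply' {A B : FreeModCat K} (x : A.obj) : (0 : A ⟶ B) x = 0 := rfl

@[simp] lemma add_apply' {A B : FreeModCat K} (f g : A ⟶ B) (x : A.obj) :
    (f + g) x = f x + g x := rfl

lemma sum_apply' {ι : Type*} (s : Finset ι) {A B : FreeModCat K} (f : ι → (A ⟶ B)) (x : A.obj) :
    (∑ i ∈ s, f i) x = ∑ i ∈ s, f i x :=
  by have h := map_sum (homLEquiv.addEquiv : (A ⟶ B) ≃+ (A.obj →ₗ[K] B.obj)) f s
     exact (congrArg (fun F : A.obj →ₗ[K] B.obj => F x) h).trans (LinearMap.sum_apply _ _ _)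

lemma mkHom_apply {A B : FreeModCat K} (f : A.obj →ₗ[K] B.obj) (x : A.obj) : mkHom f x = f x := rfl

end FreeModAux

namespace FreeModAux
variable {K : Type u} [Ring K]
variable {φ ψ : FreeModCat K ⥤ FreeModCat K}

lemma faithful' (hφψ : φ ⋙ ψ = 𝟭 (FreeModCat K)) {A B : FreeModCat K} {f g : A ⟶ B}
    (h : φ.map f = φ.map g) : f = g := by
  have hf := Functor.congr_hom hφψ f
  have hg := Functor.congr_hom hφψ g
  simp only [Functor.comp_map, Functor.id_map] at hf hg
  rw [h, hg] at hf
  have := congrArg (fun t => eqToHom (Functor.congr_obj hφψ A).symm ≫ t ≫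
    eqToHom (Functor.congr_obj hφψ B)) hf
  simpa using this.symm

lemma full' (hφψ : φ ⋙ ψ = 𝟭 (FreeModCat K)) (hψφ : ψ ⋙ φ = 𝟭 (FreeModCat K))
    {A B : FreeModCat K} (g : φ.obj A ⟶ φ.obj B) : ∃ f : A ⟶ B, φ.map f = g := by
  refine ⟨eqToHom (Functor.congr_obj hφψ A).symm ≫ ψ.map g ≫
    eqToHom (Functor.congr_obj hφψ B), ?_⟩
  have h := Functor.congr_hom hψφ g
  simp only [Functor.comp_map, Functor.id_map] at h
  simp [φ.map_comp, eqToHom_map, h]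

lemma map_zero' (hφψ : φ ⋙ ψ = 𝟭 (FreeModCat K)) (hψφ : ψ ⋙ φ = 𝟭 (FreeModCat K))
    {A B : FreeModCat K} : φ.map (0 : A ⟶ B) = 0 := by
  classical
  let Z : FreeModCat K := ⟨ModuleCat.of K (Fin 0 → K),
    ⟨inferInstanceAs (Module.Finite K (Fin 0 → K)), inferInstanceAs (Module.Free K (Fin 0 → K))⟩⟩
  have hZsub : Subsingleton (Z ⟶ Z) := by
    constructor
    intro f g
    exact hom_ext fun x => Subsingleton.elim _ _
  have hzero : ∀ y : (φ.obj Z).obj, y = 0 := by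
    obtain ⟨u, hu⟩ := full' hφψ hψφ (0 : φ.obj Z ⟶ φ.obj Z)
    have : u = 𝟙 Z := Subsingleton.elim _ _
    rw [this, φ.map_id] at hu
    intro y
    calc y = (𝟙 (φ.obj Z) : _ ⟶ _) y := rfl
    _ = (0 : φ.obj Z ⟶ φ.obj Z) y := by rw [hu]
    _ = 0 := rfl
  have h0 : (0 : A ⟶ B) = (0 : A ⟶ Z) ≫ (0 : Z ⟶ B) := hom_ext fun x => rfl
  rw [h0, φ.map_comp]
  refine hom_ext fun x => ?_
  rw [comp_apply', hzero (φ.map (0 : A ⟶ Z) x), map_zero]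
  rfl

end FreeModAux

namespace FreeModAux
variable {K : Type u} [Ring K]
variable {φ ψ : FreeModCat K ⥤ FreeModCat K}

lemma congr_ap {A B : FreeModCat K} {f g : A ⟶ B} (h : f = g) (x : A.obj) : f x = g x := by
  rw [h]

def prodObj (A : FreeModCat K) : FreeModCat K :=
  haveI := A.property.1
  haveI := A.property.2
  ⟨ModuleCat.of K (A.obj × A.obj),
    ⟨inferInstanceAs (Module.Finite K (A.obj × A.obj)),
     inferInstanceAs (Module.Free K (A.obj × A.obj))⟩⟩

def inl1 (A : FreeModCat K) : A ⟶ prodObj A := mkHom (LinearMap.inl K A.obj A.obj)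
def inr1 (A : FreeModCat K) : A ⟶ prodObj A := mkHom (LinearMap.inr K A.obj A.obj)
def fst1 (A : FreeModCat K) : prodObj A ⟶ A := mkHom (LinearMap.fst K A.obj A.obj)
def snd1 (A : FreeModCat K) : prodObj A ⟶ A := mkHom (LinearMap.snd K A.obj A.obj)

lemma map_add' (hφψ : φ ⋙ ψ = 𝟭 (FreeModCat K)) (hψφ : ψ ⋙ φ = 𝟭 (FreeModCat K))
    {A B : FreeModCat K} (f g : A ⟶ B) : φ.map (f + g) = φ.map f + φ.map g := by
  have r11 : inl1 A ≫ fst1 A = 𝟙 A := hom_ext fun x => rfl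
  have r12 : inl1 A ≫ snd1 A = (0 : A ⟶ A) := hom_ext fun x => rfl
  have r21 : inr1 A ≫ fst1 A = (0 : A ⟶ A) := hom_ext fun x => rfl
  have r22 : inr1 A ≫ snd1 A = 𝟙 A := hom_ext fun x => rfl
  have hgen : ∀ x : (prodObj A).obj, inl1 A (fst1 A x) + inr1 A (snd1 A x) = x := by
    intro x
    show ((x : A.obj × A.obj).1, (0 : A.obj)) + ((0 : A.obj), (x : A.obj × A.obj).2) = x
    ext <;> simp
  have p11 : ∀ x, fst1 A (inl1 A x) = x := fun x => (congr_ap r11 x : _)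
  have p12 : ∀ x, snd1 A (inl1 A x) = 0 := fun x => (congr_ap r12 x : _)
  have p21 : ∀ x, fst1 A (inr1 A x) = 0 := fun x => (congr_ap r21 x : _)
  have p22 : ∀ x, snd1 A (inr1 A x) = x := fun x => (congr_ap r22 x : _)
  have r11' : φ.map (inl1 A) ≫ φ.map (fst1 A) = 𝟙 (φ.obj A) := by
    rw [← φ.map_comp, r11, φ.map_id]
  have r12' : φ.map (inl1 A) ≫ φ.map (snd1 A) = 0 := by
    rw [← φ.map_comp, r12, map_zero' hφψ hψφ]
  have r21' : φ.map (inr1 A) ≫ φ.map (fst1 A) = 0 := by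
    rw [← φ.map_comp, r21, map_zero' hφψ hψφ]
  have r22' : φ.map (inr1 A) ≫ φ.map (snd1 A) = 𝟙 (φ.obj A) := by
    rw [← φ.map_comp, r22, φ.map_id]
  have p11' : ∀ x, φ.map (fst1 A) (φ.map (inl1 A) x) = x := fun x => (congr_ap r11' x : _)
  have p12' : ∀ x, φ.map (snd1 A) (φ.map (inl1 A) x) = 0 := fun x => (congr_ap r12' x : _)
  have p21' : ∀ x, φ.map (fst1 A) (φ.map (inr1 A) x) = 0 := fun x => (congr_ap r21' x : _)
  have p22' : ∀ x, φ.map (snd1 A) (φ.map (inr1 A) x) = x := fun x => (congr_ap r22' x : _)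
  -- total relation on the φ side
  have total' : ∀ y : (φ.obj (prodObj A)).obj,
      φ.map (inl1 A) (φ.map (fst1 A) y) + φ.map (inr1 A) (φ.map (snd1 A) y) = y := by
    obtain ⟨t, ht⟩ := full' hφψ hψφ
      ((φ.map (fst1 A) ≫ φ.map (inl1 A)) + (φ.map (snd1 A) ≫ φ.map (inr1 A)) :
        φ.obj (prodObj A) ⟶ φ.obj (prodObj A))
    have hi1 : inl1 A ≫ t = inl1 A := by
      apply faithful' hφψ
      rw [φ.map_comp, ht]
      refine hom_ext fun x => ?_
      simp only [comp_apply', add_apply', p11', p12', map_zero, add_zero]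
    have hi2 : inr1 A ≫ t = inr1 A := by
      apply faithful' hφψ
      rw [φ.map_comp, ht]
      refine hom_ext fun x => ?_
      simp only [comp_apply', add_apply', p21', p22', map_zero, zero_add]
    have ht1 : t = 𝟙 (prodObj A) := by
      refine hom_ext fun x => ?_
      have hx := hgen x
      calc t x = t (inl1 A (fst1 A x) + inr1 A (snd1 A x)) := by rw [hx]
      _ = t (inl1 A (fst1 A x)) + t (inr1 A (snd1 A x)) := map_add _ _ _
      _ = (inl1 A ≫ t) (fst1 A x) + (inr1 A ≫ t) (snd1 A x) := rfl
      _ = inl1 A (fst1 A x) + inr1 A (snd1 A x) := by rw [hi1, hi2]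
      _ = x := hx
    rw [ht1, φ.map_id] at ht
    intro y
    have := congr_ap ht y
    simpa using this.symm
  -- decompose f + g
  have hdecomp : f + g = (inl1 A + inr1 A) ≫ (fst1 A ≫ f + snd1 A ≫ g) := by
    refine hom_ext fun x => ?_
    simp only [add_apply', comp_apply', map_add, p11, p12, p21, p22, map_zero,
      add_zero, zero_add]
  have hd : ∀ x : (φ.obj A).obj,
      φ.map (inl1 A + inr1 A) x = φ.map (inl1 A) x + φ.map (inr1 A) x := by
    intro x
    have c1 : (inl1 A + inr1 A) ≫ fst1 A = 𝟙 A := by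
      refine hom_ext fun x => ?_
      simp only [comp_apply', add_apply', map_add, p11, p21, add_zero, id_apply']
    have c2 : (inl1 A + inr1 A) ≫ snd1 A = 𝟙 A := by
      refine hom_ext fun x => ?_
      simp only [comp_apply', add_apply', map_add, p12, p22, zero_add, id_apply']
    have c1' : φ.map (inl1 A + inr1 A) ≫ φ.map (fst1 A) = 𝟙 (φ.obj A) := by
      rw [← φ.map_comp, c1, φ.map_id]
    have c2' : φ.map (inl1 A + inr1 A) ≫ φ.map (snd1 A) = 𝟙 (φ.obj A) := by
      rw [← φ.map_comp, c2, φ.map_id]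
    calc φ.map (inl1 A + inr1 A) x
        = φ.map (inl1 A) (φ.map (fst1 A) (φ.map (inl1 A + inr1 A) x)) +
          φ.map (inr1 A) (φ.map (snd1 A) (φ.map (inl1 A + inr1 A) x)) := (total' _).symm
      _ = φ.map (inl1 A) ((φ.map (inl1 A + inr1 A) ≫ φ.map (fst1 A)) x) +
          φ.map (inr1 A) ((φ.map (inl1 A + inr1 A) ≫ φ.map (snd1 A)) x) := rfl
      _ = φ.map (inl1 A) x + φ.map (inr1 A) x := by rw [c1', c2']; simp
  have hh1 : inl1 A ≫ (fst1 A ≫ f + snd1 A ≫ g) = f := by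
    refine hom_ext fun x => ?_
    simp only [comp_apply', add_apply', p11, p12, map_zero, add_zero]
  have hh2 : inr1 A ≫ (fst1 A ≫ f + snd1 A ≫ g) = g := by
    refine hom_ext fun x => ?_
    simp only [comp_apply', add_apply', p21, p22, map_zero, zero_add]
  refine hom_ext fun x => ?_
  have e1 : φ.map (f + g) x = φ.map (fst1 A ≫ f + snd1 A ≫ g) (φ.map (inl1 A + inr1 A) x) := by
    rw [hdecomp, φ.map_comp]; rfl
  rw [e1, hd, map_add]
  rw [show φ.map (fst1 A ≫ f + snd1 A ≫ g) (φ.map (inl1 A) x)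
      = (φ.map (inl1 A) ≫ φ.map (fst1 A ≫ f + snd1 A ≫ g)) x from rfl,
    show φ.map (fst1 A ≫ f + snd1 A ≫ g) (φ.map (inr1 A) x)
      = (φ.map (inr1 A) ≫ φ.map (fst1 A ≫ f + snd1 A ≫ g)) x from rfl,
    ← φ.map_comp, ← φ.map_comp, hh1, hh2]
  rfl

end FreeModAux

namespace FreeModAux
variable {K : Type u} [Ring K]
variable {φ ψ : FreeModCat K ⥤ FreeModCat K}

/-- Transport of a "free coordinate system" along a strict equivalence. -/
lemma transport (hφψ : φ ⋙ ψ = 𝟭 (FreeModCat K)) (hψφ : ψ ⋙ φ = 𝟭 (FreeModCat K))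
    (A : FreeModCat K) {n : ℕ} (e : Fin n → (KO K ⟶ A)) (p : Fin n → (A ⟶ KO K))
    (h1 : ∀ i, e i ≫ p i = 𝟙 (KO K))
    (h2 : ∀ i j, i ≠ j → e i ≫ p j = (0 : KO K ⟶ KO K))
    (h3 : ∀ a : A.obj, ∑ i, e i (p i a) = a) :
    ∃ (e' : Fin n → (φ.obj (KO K) ⟶ φ.obj A)) (p' : Fin n → (φ.obj A ⟶ φ.obj (KO K))),
      (∀ i, e' i ≫ p' i = 𝟙 (φ.obj (KO K))) ∧
      (∀ i j, i ≠ j → e' i ≫ p' j = (0 : φ.obj (KO K) ⟶ φ.obj (KO K))) ∧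
      (∀ a : (φ.obj A).obj, ∑ i, (e' i) ((p' i) a) = a) := by
  refine ⟨fun i => φ.map (e i), fun i => φ.map (p i), ?_, ?_, ?_⟩
  · intro i; rw [← φ.map_comp, h1, φ.map_id]
  · intro i j hij; rw [← φ.map_comp, h2 i j hij, map_zero' hφψ hψφ]
  · -- the sum relation
    have hsum : ∀ a : A.obj, (∑ i, p i ≫ e i) a = a := by
      intro a
      rw [sum_apply']
      exact h3 a
    obtain ⟨t, ht⟩ := full' hφψ hψφ (∑ i, φ.map (p i) ≫ φ.map (e i) : φ.obj A ⟶ φ.obj A)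
    have hei : ∀ i, e i ≫ t = e i := by
      intro i
      apply faithful' hφψ
      rw [φ.map_comp, ht]
      refine hom_ext fun x => ?_
      rw [comp_apply', sum_apply']
      have : ∀ j, (φ.map (p j) ≫ φ.map (e j)) (φ.map (e i) x)
          = if j = i then φ.map (e i) x else 0 := by
        intro j
        by_cases hj : j = i
        · subst hj
          have := congr_ap ((φ.map_comp (e j) (p j)).symm.trans
            (by rw [h1, φ.map_id] : φ.map (e j ≫ p j) = 𝟙 (φ.obj (KO K)))) x
          calc (φ.map (p j) ≫ φ.map (e j)) (φ.map (e j) x)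
              = φ.map (e j) ((φ.map (e j) ≫ φ.map (p j)) x) := rfl
            _ = φ.map (e j) x := by rw [this]; rfl
            _ = if j = j then φ.map (e j) x else 0 := by simp
        · have := congr_ap ((φ.map_comp (e i) (p j)).symm.trans
            (by rw [h2 i j (fun h => hj h.symm), map_zero' hφψ hψφ] :
              φ.map (e i ≫ p j) = 0)) x
          calc (φ.map (p j) ≫ φ.map (e j)) (φ.map (e i) x)
              = φ.map (e j) ((φ.map (e i) ≫ φ.map (p j)) x) := rfl
            _ = φ.map (e j) 0 := by rw [this]; rfl
            _ = if j = i then φ.map (e i) x else 0 := by simp [hj]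
      rw [Finset.sum_congr rfl fun j _ => this j, Finset.sum_ite_eq' Finset.univ i
        (fun _ => φ.map (e i) x)]
      simp
    have ht1 : t = 𝟙 A := by
      refine hom_ext fun a => ?_
      calc t a = t (∑ i, e i (p i a)) := by rw [h3 a]
        _ = ∑ i, t (e i (p i a)) := map_sum t _ _
        _ = ∑ i, (e i ≫ t) (p i a) := rfl
        _ = ∑ i, e i (p i a) := by
              refine Finset.sum_congr rfl fun i _ => ?_
              rw [hei i]
        _ = a := h3 a
    rw [ht1, φ.map_id] at ht
    intro a
    have := congr_ap ht a
    rw [sum_apply'] at this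
    simpa using this.symm

end FreeModAux

namespace FreeModAux
variable {K : Type u} [Ring K]

/-- Every object of `FreeModCat` carries a finite free coordinate system. -/
lemma free_data (A : FreeModCat K) :
    ∃ (n : ℕ) (e : Fin n → (KO K ⟶ A)) (p : Fin n → (A ⟶ KO K)),
      (∀ i, e i ≫ p i = 𝟙 (KO K)) ∧
      (∀ i j, i ≠ j → e i ≫ p j = (0 : KO K ⟶ KO K)) ∧
      (∀ a : A.obj, ∑ i, e i (p i a) = a) := by
  classical
  haveI := A.property.1
  haveI := A.property.2
  haveI := Module.Free.ChooseBasisIndex.fintype K A.obj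
  let b := (Module.Free.chooseBasis K A.obj).reindex
    (Fintype.equivFin (Module.Free.ChooseBasisIndex K A.obj))
  refine ⟨Fintype.card (Module.Free.ChooseBasisIndex K A.obj),
    fun i => mkHom (LinearMap.toSpanSingleton K A.obj (b i)),
    fun i => mkHom (b.coord i), ?_, ?_, ?_⟩
  · intro i
    refine hom_ext fun x => ?_
    show b.coord i ((@id K x) • b i) = x
    rw [map_smul, Module.Basis.coord_apply, Module.Basis.repr_self_apply]
    simp
    rfl
  · intro i j hij
    refine hom_ext fun x => ?_
    show b.coord j ((@id K x) • b i) = 0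
    rw [map_smul, Module.Basis.coord_apply, Module.Basis.repr_self_apply]
    simp [hij]
  · intro a
    have := b.sum_repr a
    calc ∑ i, (mkHom (LinearMap.toSpanSingleton K A.obj (b i)) : KO K ⟶ A)
          ((mkHom (b.coord i) : A ⟶ KO K) a)
        = ∑ i, b.repr a i • b i := by
          refine Finset.sum_congr rfl fun i _ => ?_
          show LinearMap.toSpanSingleton K A.obj (b i) (b.coord i a) = b.repr a i • b i
          rw [LinearMap.toSpanSingleton_apply, Module.Basis.coord_apply]
      _ = a := this

/-- A coordinate system turns `M` into `Fin n → W`. -/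
lemma equiv_of_data {M W : Type u} [AddCommGroup M] [Module K M] [AddCommGroup W] [Module K W]
    {n : ℕ} (e : Fin n → (W →ₗ[K] M)) (p : Fin n → (M →ₗ[K] W))
    (h1 : ∀ i x, p i (e i x) = x)
    (h2 : ∀ i j, i ≠ j → ∀ x, p j (e i x) = 0)
    (h3 : ∀ a, ∑ i, e i (p i a) = a) :
    Nonempty (M ≃ₗ[K] (Fin n → W)) := by
  classical
  refine ⟨LinearEquiv.ofLinear (LinearMap.pi p) (∑ i, (e i).comp (LinearMap.proj i)) ?_ ?_⟩
  · refine LinearMap.ext fun c => ?_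
    funext j
    rw [LinearMap.comp_apply, LinearMap.pi_apply, LinearMap.sum_apply]
    have : ∀ i, p j ((e i).comp (LinearMap.proj i) c) = if i = j then c j else 0 := by
      intro i
      by_cases hij : i = j
      · subst hij; simp [h1]
      · simp [LinearMap.comp_apply, h2 i j hij, hij]
    rw [map_sum, Finset.sum_congr rfl fun i _ => this i]
    simp
  · refine LinearMap.ext fun a => ?_
    rw [LinearMap.comp_apply, LinearMap.sum_apply]
    have : ∀ i, ((e i).comp (LinearMap.proj i)) (LinearMap.pi p a) = e i (p i a) := by
      intro i; simp [LinearMap.comp_apply]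
    rw [Finset.sum_congr rfl fun i _ => this i]
    simpa using h3 a

/-- Over a nontrivial left noetherian ring, `K ≃ₗ K^{m×n}` forces `m = n = 1`. -/
lemma aux_rank [IsNoetherianRing K] [Nontrivial K] {m n : ℕ}
    (E : K ≃ₗ[K] (Fin m → Fin n → K)) : m = 1 ∧ n = 1 := by
  classical
  haveI : IsNoetherian K K := by
    rwa [← isNoetherianRing_iff]
  have hm0 : m ≠ 0 := by
    rintro rfl
    haveI : Subsingleton (Fin 0 → Fin n → K) := inferInstance
    haveI : Subsingleton K := E.toEquiv.subsingleton
    exact false_of_nontrivial_of_subsingleton K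
  have hn0 : n ≠ 0 := by
    rintro rfl
    haveI : Subsingleton (Fin 0 → K) := inferInstance
    haveI : Subsingleton (Fin m → Fin 0 → K) := inferInstance
    haveI : Subsingleton K := E.toEquiv.subsingleton
    exact false_of_nontrivial_of_subsingleton K
  -- main claim: there are no two distinct index pairs
  have key : ∀ (i₀ i₁ : Fin m) (j₀ j₁ : Fin n), (i₀, j₀) ≠ (i₁, j₁) → False := by
    intro i₀ i₁ j₀ j₁ hne
    set g : K →ₗ[K] K :=
      (LinearMap.proj j₀).comp ((LinearMap.proj i₀).comp E.toLinearMap) with hg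
    have hsurj : Function.Surjective g := by
      intro y
      refine ⟨E.symm (Pi.single i₀ (Pi.single j₀ y)), ?_⟩
      simp [hg, LinearMap.comp_apply]
    have hinj : Function.Injective g :=
      IsNoetherian.injective_of_surjective_endomorphism g hsurj
    set x : K := E.symm (Pi.single i₁ (Pi.single j₁ 1)) with hx
    have hgx : g x = 0 := by
      simp only [hg, hx, LinearMap.comp_apply, LinearEquiv.coe_coe,
        LinearEquiv.apply_symm_apply, LinearMap.proj_apply]
      by_cases hii : i₁ = i₀
      · subst hii
        have hjj : j₁ ≠ j₀ := by
          intro h; exact hne (by rw [h])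
        rw [Pi.single_eq_same]
        exact Pi.single_eq_of_ne (fun h => hjj h.symm) 1
      · have h0 : (Pi.single i₁ (Pi.single j₁ (1:K)) : Fin m → Fin n → K) i₀ = 0 :=
          Pi.single_eq_of_ne (fun h => hii h.symm) _
        rw [h0]
        rfl
    have hx0 : x = 0 := by
      apply hinj
      rw [hgx, map_zero]
    have : (1 : K) = 0 := by
      have h1 : E x = Pi.single i₁ (Pi.single j₁ (1:K)) := by
        rw [hx]; exact E.apply_symm_apply _
      rw [hx0, map_zero] at h1
      have := congrFun (congrFun h1.symm i₁) j₁
      simpa using this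
    exact one_ne_zero this
  constructor
  · by_contra hm
    have : 2 ≤ m := by omega
    exact key ⟨0, by omega⟩ ⟨1, by omega⟩ ⟨0, by omega⟩ ⟨0, by omega⟩
      (by simp [Fin.ext_iff, Prod.ext_iff])
  · by_contra hn
    have : 2 ≤ n := by omega
    exact key ⟨0, by omega⟩ ⟨0, by omega⟩ ⟨0, by omega⟩ ⟨1, by omega⟩
      (by simp [Fin.ext_iff, Prod.ext_iff])

end FreeModAux

open FreeModAux in
/-- Every automorphism `φ` of the category of finitely generated free left
modules over a left noetherian ring `K` is semi-inner: there are a ring automorphism `σ` of `K`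
and, for each object `A`, a `σ`-semilinear bijection `s A : A → φ(A)` such that
`φ(ν) = s B ∘ ν ∘ (s A)⁻¹` for every `K`-linear map `ν : A ⟶ B`. -/
theorem automorphism_of_freeModCat_is_semiInner
    (K : Type u) [Ring K] [IsNoetherianRing K]
    (φ ψ : FreeModCat K ⥤ FreeModCat K)
    (hφψ : φ ⋙ ψ = 𝟭 (FreeModCat K)) (hψφ : ψ ⋙ φ = 𝟭 (FreeModCat K)) :
    ∃ σ : K ≃+* K, ∃ s : ∀ A : FreeModCat K, A.obj → (φ.obj A).obj,
      (∀ A : FreeModCat K, Function.Bijective (s A)) ∧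
      (∀ (A : FreeModCat K) (a a' : A.obj), s A (a + a') = s A a + s A a') ∧
      (∀ (A : FreeModCat K) (l : K) (a : A.obj), s A (l • a) = σ l • s A a) ∧
      (∀ (A B : FreeModCat K) (ν : A ⟶ B) (a : A.obj),
        (show (φ.obj A).obj ⟶ (φ.obj B).obj from (φ.map ν).hom) (s A a)
          = s B ((show A.obj ⟶ B.obj from ν.hom) a)) := by
  classical
  rcases subsingleton_or_nontrivial K with hK | hK
  · -- degenerate case: the zero ring
    refine ⟨RingEquiv.refl K, fun A _ => 0, ?_, ?_, ?_, ?_⟩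
    · intro A
      haveI := Module.subsingleton K A.obj
      haveI := Module.subsingleton K (φ.obj A).obj
      exact ⟨fun a a' _ => Subsingleton.elim _ _, fun y => ⟨0, Subsingleton.elim _ _⟩⟩
    · intro A a a'
      haveI := Module.subsingleton K (φ.obj A).obj
      exact Subsingleton.elim _ _
    · intro A l a
      haveI := Module.subsingleton K (φ.obj A).obj
      exact Subsingleton.elim _ _
    · intro A B ν a
      haveI := Module.subsingleton K (φ.obj B).obj
      exact Subsingleton.elim _ _
  -- main case: K nontrivial
  -- coordinate data for φ(K) and ψ(K)
  obtain ⟨nφ, eφ, pφ, h1φ, h2φ, h3φ⟩ := free_data (φ.obj (KO K))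
  obtain ⟨nψ, eψ, pψ, h1ψ, h2ψ, h3ψ⟩ := free_data (ψ.obj (KO K))
  -- transport the data of φ(K) along ψ; it lands on ψ(φ(K)) = K
  obtain ⟨e', p', h1', h2', h3'⟩ :=
    transport (φ := ψ) (ψ := φ) hψφ hφψ (φ.obj (KO K)) eφ pφ h1φ h2φ h3φ
  have E1 : Nonempty ((ψ.obj (φ.obj (KO K))).obj ≃ₗ[K] (Fin nφ → (ψ.obj (KO K)).obj)) :=
    equiv_of_data (fun i => (e' i).hom.hom)
      (fun i => (p' i).hom.hom)
      (fun i x => congr_ap (h1' i) x)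
      (fun i j hij x => congr_ap (h2' i j hij) x)
      h3'
  have hobjK : ψ.obj (φ.obj (KO K)) = KO K := Functor.congr_obj hφψ (KO K)
  rw [hobjK] at E1
  obtain ⟨E1⟩ := E1
  obtain ⟨E2⟩ : Nonempty ((ψ.obj (KO K)).obj ≃ₗ[K] (Fin nψ → K)) :=
    equiv_of_data (fun i => (eψ i).hom.hom)
      (fun i => (pψ i).hom.hom)
      (fun i x => congr_ap (h1ψ i) x)
      (fun i j hij x => congr_ap (h2ψ i j hij) x)
      h3ψ
  have Efin : K ≃ₗ[K] (Fin nφ → Fin nψ → K) :=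
    (E1 : K ≃ₗ[K] (Fin nφ → (ψ.obj (KO K)).obj)).trans
      (LinearEquiv.piCongrRight fun _ => E2)
  obtain ⟨hnφ, -⟩ := aux_rank Efin
  subst hnφ
  -- now φ(K) is free of rank one, with "basis element" v
  let e0 : KO K ⟶ φ.obj (KO K) := eφ 0
  let p0 : φ.obj (KO K) ⟶ KO K := pφ 0
  let one' : (KO K).obj := show (KO K).obj from (1 : K)
  let v : (φ.obj (KO K)).obj := e0 one'
  -- scalar action facts
  have he0smul : ∀ c : K, e0 (show (KO K).obj from c) = c • v := by
    intro c
    have h := map_smul e0 c one'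
    rw [← h]
    congr 1
    exact (mul_one c).symm
  have F1 : ∀ x : (φ.obj (KO K)).obj, (@id K (p0 x)) • v = x := by
    intro x
    have h := h3φ x
    rw [Fin.sum_univ_one] at h
    rw [← he0smul (@id K (p0 x))]
    exact h
  have cov : p0 v = one' := congr_ap (h1φ 0) one'
  have hco : ∀ c : K, @Eq K (p0 (c • v)) c := by
    intro c
    rw [map_smul p0 c v, cov]
    exact mul_one c
  -- maps out of φ(K) are determined by their value on v
  have det : ∀ {B : FreeModCat K} (g g' : φ.obj (KO K) ⟶ B), g v = g' v → g = g' := by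
    intro B g g' hgv
    refine hom_ext fun x => ?_
    rw [← F1 x, map_smul, map_smul, hgv]
  -- the element maps
  let νm : ∀ {A : FreeModCat K}, A.obj → (KO K ⟶ A) := fun {A} a =>
    mkHom (LinearMap.toSpanSingleton K A.obj a)
  let μ : K → (KO K ⟶ KO K) := fun l => νm (show (KO K).obj from l)
  have hνone : ∀ {A : FreeModCat K} (a : A.obj), νm a one' = a := fun a => one_smul K a
  have hνend : ∀ {A : FreeModCat K} (u : KO K ⟶ A), u = νm (u one') := by
    intro A u
    refine hom_ext fun x => ?_
    have h := map_smul u (@id K x) one'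
    calc u x = u ((@id K x) • one') := by congr 1; exact (mul_one (@id K x)).symm
      _ = (@id K x) • u one' := h
      _ = νm (u one') x := rfl
  have hνadd : ∀ {A : FreeModCat K} (a a' : A.obj), νm (a + a') = νm a + νm a' := by
    intro A a a'
    exact hom_ext fun x => smul_add (@id K x) a a'
  have hνsmul : ∀ {A : FreeModCat K} (l : K) (a : A.obj), νm (l • a) = μ l ≫ νm a := by
    intro A l a
    exact hom_ext fun x => (mul_smul (@id K x) l a).symm
  have hνnat : ∀ {A B : FreeModCat K} (f : A ⟶ B) (a : A.obj), νm (f a) = νm a ≫ f := by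
    intro A B f a
    exact hom_ext fun x => (map_smul f (@id K x) a).symm
  have hμone : μ 1 = 𝟙 (KO K) := hom_ext fun x => mul_one (@id K x)
  have hμmul : ∀ l l', μ (l * l') = μ l ≫ μ l' :=
    fun l l' => hom_ext fun x => (mul_assoc (@id K x) l l').symm
  have hμadd : ∀ l l', μ (l + l') = μ l + μ l' :=
    fun l l' => hom_ext fun x => mul_add (@id K x) l l'
  have hμzero : μ 0 = 0 := hom_ext fun x => mul_zero (@id K x)
  -- the ring automorphism
  let σf : K → K := fun l => @id K (p0 (φ.map (μ l) v))
  have hσ : ∀ l, φ.map (μ l) v = σf l • v := fun l => (F1 _).symm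
  have σone : σf 1 = 1 := by
    have h : φ.map (μ 1) v = v := by rw [hμone, φ.map_id]; rfl
    show @Eq K (p0 (φ.map (μ 1) v)) 1
    rw [h, cov]
  have σmul : ∀ l l', σf (l * l') = σf l * σf l' := by
    intro l l'
    have h : φ.map (μ (l * l')) v = (σf l * σf l') • v := by
      rw [hμmul, φ.map_comp]
      have hc : (φ.map (μ l) ≫ φ.map (μ l')) v = φ.map (μ l') (φ.map (μ l) v) := rfl
      rw [hc, hσ l, map_smul, hσ l', smul_smul]
    show @Eq K (p0 (φ.map (μ (l * l')) v)) (σf l * σf l')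
    rw [h]
    exact hco _
  have σadd : ∀ l l', σf (l + l') = σf l + σf l' := by
    intro l l'
    have h : φ.map (μ (l + l')) v = (σf l + σf l') • v := by
      rw [hμadd, map_add' hφψ hψφ, add_apply', hσ l, hσ l', add_smul]
    show @Eq K (p0 (φ.map (μ (l + l')) v)) (σf l + σf l')
    rw [h]
    exact hco _
  have σinj : Function.Injective σf := by
    intro l l' hll
    have hv : φ.map (μ l) v = φ.map (μ l') v := by rw [hσ l, hσ l', hll]
    have hmm : μ l = μ l' := faithful' hφψ (det _ _ hv)
    have := congr_ap hmm one'
    calc l = @id K one' * l := (one_mul l).symm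
      _ = @id K one' * l' := this
      _ = l' := one_mul l'
  have σsurj : Function.Surjective σf := by
    intro c
    obtain ⟨u, hu⟩ := full' hφψ hψφ
      (mkHom ((LinearMap.toSpanSingleton K (φ.obj (KO K)).obj (c • v)).comp
        (p0.hom.hom)) : φ.obj (KO K) ⟶ φ.obj (KO K))
    refine ⟨@id K (u one'), ?_⟩
    have hu1 : u = μ (@id K (u one')) := hνend u
    show @Eq K (p0 (φ.map (μ (@id K (u one'))) v)) c
    rw [← hu1, hu]
    have hgv : (mkHom ((LinearMap.toSpanSingleton K (φ.obj (KO K)).obj (c • v)).comp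
        (p0.hom.hom)) : φ.obj (KO K) ⟶ φ.obj (KO K)) v = c • v := by
      show LinearMap.toSpanSingleton K (φ.obj (KO K)).obj (c • v) (@id K (p0 v)) = c • v
      rw [LinearMap.toSpanSingleton_apply]
      rw [show @id K (p0 v) = 1 from cov]
      exact one_smul K _
    rw [hgv]
    exact hco _
  -- the semilinear bijections
  let s : ∀ A : FreeModCat K, A.obj → (φ.obj A).obj := fun A a => φ.map (νm a) v
  have snat : ∀ {A B : FreeModCat K} (f : A ⟶ B) (a : A.obj),
      φ.map f (s A a) = s B (f a) := by
    intro A B f a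
    show φ.map f (φ.map (νm a) v) = φ.map (νm (f a)) v
    rw [hνnat f a, φ.map_comp]
    rfl
  have sadd : ∀ (A : FreeModCat K) (a a' : A.obj), s A (a + a') = s A a + s A a' := by
    intro A a a'
    show φ.map (νm (a + a')) v = φ.map (νm a) v + φ.map (νm a') v
    rw [hνadd, map_add' hφψ hψφ, add_apply']
  have ssmul : ∀ (A : FreeModCat K) (l : K) (a : A.obj), s A (l • a) = σf l • s A a := by
    intro A l a
    show φ.map (νm (l • a)) v = σf l • φ.map (νm a) v
    rw [hνsmul, φ.map_comp]
    have hc : (φ.map (μ l) ≫ φ.map (νm a)) v = φ.map (νm a) (φ.map (μ l) v) := rfl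
    rw [hc, hσ l, map_smul]
  have sbij : ∀ A : FreeModCat K, Function.Bijective (s A) := by
    intro A
    constructor
    · intro a a' haa
      have h : φ.map (νm a) = φ.map (νm a') := det _ _ haa
      have h2 : νm a = νm a' := faithful' hφψ h
      have := congr_ap h2 one'
      calc a = νm a one' := (hνone a).symm
        _ = νm a' one' := this
        _ = a' := hνone a'
    · intro y
      obtain ⟨u, hu⟩ := full' hφψ hψφ
        (mkHom ((LinearMap.toSpanSingleton K (φ.obj A).obj y).comp
          (p0.hom.hom)) : φ.obj (KO K) ⟶ φ.obj A)
      refine ⟨u one', ?_⟩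
      have hu1 : u = νm (u one') := hνend u
      show φ.map (νm (u one')) v = y
      rw [← hu1, hu]
      show LinearMap.toSpanSingleton K (φ.obj A).obj y (@id K (p0 v)) = y
      rw [LinearMap.toSpanSingleton_apply]
      rw [show @id K (p0 v) = 1 from cov]
      exact one_smul K _
  -- assemble
  have σzero : σf 0 = 0 := by
    have h : φ.map (μ 0) v = (0 : K) • v := by
      rw [hμzero, map_zero' hφψ hψφ, zero_smul]
      rfl
    show @Eq K (p0 (φ.map (μ 0) v)) 0
    rw [h]
    exact hco _
  let σ₀ : K →+* K :=
    { toFun := σf, map_one' := σone, map_mul' := σmul 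
      map_zero' := σzero, map_add' := σadd }
  refine ⟨RingEquiv.ofBijective σ₀ ⟨σinj, σsurj⟩, s, sbij, sadd, ?_, ?_⟩
  · intro A l a
    have := ssmul A l a
    rw [this]
    rfl
  · intro A B ν a
    exact snat ν a
end

section
/- Let K be a ring with unit such that every automorphism of the category C0 of finitely generated free left K-modules is semi-inner. Then the group Out(C0) = Aut(C0)/Int(C0) of outer automorphisms of the category C0 is isomorphic to the group Out(K) = Aut(K)/Int(K) of outer automorphisms of the ring K. -/
open CategoryTheory

universe u

/-- An endofunctor `φ` of the category of finitely generated free left `K`-modules is semi-inner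
if there are a ring automorphism `σ` of `K` and, for every object `A`, a `σ`-semilinear bijection
`s A : A → φ(A)` such that `φ(ν) = s B ∘ ν ∘ (s A)⁻¹` for every `K`-linear map `ν : A ⟶ B`. -/
def IsSemiInner (K : Type u) [Ring K] (φ : FreeModCat K ⥤ FreeModCat K) : Prop :=
  ∃ σ : K ≃+* K, ∃ s : ∀ A : FreeModCat K, A.obj → (φ.obj A).obj,
    (∀ A : FreeModCat K, Function.Bijective (s A)) ∧
    (∀ (A : FreeModCat K) (a a' : A.obj), s A (a + a') = s A a + s A a') ∧
    (∀ (A : FreeModCat K) (l : K) (a : A.obj), s A (l • a) = σ l • s A a) ∧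
    (∀ (A B : FreeModCat K) (ν : A ⟶ B) (a : A.obj),
      (show (φ.obj A).obj ⟶ (φ.obj B).obj from (φ.map ν).hom) (s A a)
        = s B ((show A.obj ⟶ B.obj from ν.hom) a))

/-- The group `Aut C0` of (strict) automorphisms of the category of finitely generated free left
`K`-modules: invertible endofunctors of `C0`, i.e. automorphisms of `C0` as an object of the
category `Cat` of categories. -/
def CatAut (K : Type u) [Ring K] :=
  Aut (Cat.of (FreeModCat K))

noncomputable instance (K : Type u) [Ring K] : Group (CatAut K) :=
  inferInstanceAs (Group (Aut (Cat.of (FreeModCat K))))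

/-- The subgroup `Int C0 ≤ Aut C0` of inner automorphisms, i.e. those automorphisms of the
category `C0` that are naturally isomorphic to the identity functor. -/
def innerCatAuts (K : Type u) [Ring K] : Subgroup (CatAut K) where
  carrier := { F : CatAut K |
    Nonempty (F.hom.toFunctor ≅ 𝟭 (FreeModCat K)) }
  one_mem' := ⟨Iso.refl _⟩
  mul_mem' := by
    rintro F G ⟨i⟩ ⟨j⟩
    exact ⟨Functor.isoWhiskerLeft G.hom.toFunctor i ≪≫
      Functor.rightUnitor _ ≪≫ j⟩
  inv_mem' := by
    rintro F ⟨i⟩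
    exact ⟨(Functor.leftUnitor _).symm ≪≫
      Functor.isoWhiskerRight i.symm F.inv.toFunctor ≪≫
      eqToIso (show F.hom.toFunctor ⋙ F.inv.toFunctor = 𝟭 _ from congrArg Cat.Hom.toFunctor F.hom_inv_id)⟩

instance (K : Type u) [Ring K] : (innerCatAuts K).Normal := by
  constructor
  intro n hn g
  obtain ⟨i⟩ := hn
  refine ⟨?_⟩
  have : (g * n * g⁻¹).hom.toFunctor
      = (g.inv.toFunctor ⋙ n.hom.toFunctor) ⋙ g.hom.toFunctor := rfl
  rw [this]
  exact Functor.isoWhiskerRight (Functor.isoWhiskerLeft g.inv.toFunctor i ≪≫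
      Functor.rightUnitor _) g.hom.toFunctor ≪≫
    eqToIso (show g.inv.toFunctor ⋙ g.hom.toFunctor = 𝟭 _ from congrArg Cat.Hom.toFunctor g.inv_hom_id)

/-- The subgroup `Int K ≤ Aut K` of inner automorphisms of the ring `K`: the conjugations
`a ↦ u * a * u⁻¹` by invertible elements `u` of `K`. -/
def innerRingAuts (K : Type u) [Ring K] : Subgroup (RingAut K) where
  carrier := { σ : RingAut K | ∃ u : Kˣ, ∀ a : K, σ a = ↑u * a * ↑u⁻¹ }
  one_mem' := ⟨1, fun a => by show a = ↑(1 : Kˣ) * a * ↑(1 : Kˣ)⁻¹; simp⟩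
  mul_mem' := by
    rintro σ τ ⟨u, hu⟩ ⟨v, hv⟩
    refine ⟨u * v, fun a => ?_⟩
    have : (σ * τ) a = σ (τ a) := rfl
    rw [this, hv, hu]
    simp [mul_assoc]
  inv_mem' := by
    rintro σ ⟨u, hu⟩
    refine ⟨u⁻¹, fun a => σ.injective ?_⟩
    have : σ (σ⁻¹ a) = a := σ.apply_symm_apply a
    rw [this, hu]
    simp [mul_assoc]

instance (K : Type u) [Ring K] : (innerRingAuts K).Normal := by
  constructor
  rintro n ⟨u, hu⟩ g
  refine ⟨Units.map (g : RingAut K).toRingHom.toMonoidHom u, fun a => ?_⟩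
  have h1 : (g * n * g⁻¹) a = g (n (g⁻¹ a)) := rfl
  have h2 : g (g⁻¹ a) = a := g.apply_symm_apply a
  rw [h1, hu, map_mul, map_mul, h2, ← map_inv]
  rfl

namespace OutProof

variable {K : Type u} [Ring K]

/-! ### Twist functors -/

def twistMod (f : K →+* K) (M : ModuleCat.{u} K) : ModuleCat.{u} K :=
  @ModuleCat.of K _ M.carrier M.isAddCommGroup (Module.compHom M.carrier f)

lemma twistMod_smul (f : K →+* K) (M : ModuleCat.{u} K) (l : K) (m : M) :
    (show twistMod f M from m) = m := rfl

def twistMap (f : K →+* K) {M N : ModuleCat.{u} K} (ν : M ⟶ N) : twistMod f M ⟶ twistMod f N :=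
  ConcreteCategory.ofHom (C := ModuleCat K) (show twistMod f M →ₗ[K] twistMod f N from
    { toFun := ν.hom, map_add' := ν.hom.map_add, map_smul' := fun l a => ν.hom.map_smul (f l) a })

def GoodTwist (f : K →+* K) : Prop :=
  ∀ M : ModuleCat.{u} K, (Module.Finite K M ∧ Module.Free K M) →
    (Module.Finite K (twistMod f M) ∧ Module.Free K (twistMod f M))

lemma goodTwist_id : GoodTwist (RingHom.id K) := fun _ h => h

attribute [local instance] RingHomInvPair.of_ringEquiv in
lemma free_twist (e : K ≃+* K) (M : ModuleCat.{u} K) [Module.Free K M] :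
    Module.Free K (twistMod (e : K →+* K) M) := by
  haveI : RingHomInvPair (e.symm : K →+* K) (e : K →+* K) := RingHomInvPair.of_ringEquiv e.symm
  haveI : RingHomInvPair (e : K →+* K) (e.symm : K →+* K) := RingHomInvPair.of_ringEquiv e
  refine Module.Free.of_equiv (R := K) (R' := K) (M := M)
    (M' := twistMod (e : K →+* K) M) (σ := (e.symm : K →+* K)) (σ' := (e : K →+* K)) ?_
  exact
    { toFun := fun m => m
      invFun := fun m => m
      left_inv := fun _ => rfl
      right_inv := fun _ => rfl
      map_add' := fun _ _ => rfl
      map_smul' := fun l m => by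
        show (l • m : M) = e (e.symm l) • m
        rw [e.apply_symm_apply] }

lemma finite_twist (e : K ≃+* K) (M : ModuleCat.{u} K) [hfin : Module.Finite K M] :
    Module.Finite K (twistMod (e : K →+* K) M) := by
  obtain ⟨s, hs⟩ := hfin.fg_top
  let N := twistMod (e : K →+* K) M
  let s' : Finset N := s
  have key : ∀ x : M, x ∈ Submodule.span K (s : Set M) →
      (show N from x) ∈ Submodule.span K (s' : Set N) := by
    intro x hx
    induction hx using Submodule.span_induction with
    | mem y hy => exact Submodule.subset_span hy
    | zero => exact Submodule.zero_mem _
    | add a b _ _ ha hb => exact Submodule.add_mem _ ha hb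
    | smul l y _ hy =>
      have h2 : (l • y : M) = (e.symm l • (show N from y) : N) := by
        show (l • y : M) = e (e.symm l) • y
        rw [e.apply_symm_apply]
      exact h2 ▸ Submodule.smul_mem _ _ hy
  refine ⟨⟨s', ?_⟩⟩
  rw [eq_top_iff]
  rintro m -
  exact key m (by rw [hs]; trivial)

lemma goodTwist_equiv (e : K ≃+* K) : GoodTwist (e : K →+* K) := by
  intro M hM
  have h1 := hM.1; have h2 := hM.2
  exact ⟨finite_twist e M, free_twist e M⟩

def twistF (p : {f : K →+* K // GoodTwist f}) : FreeModCat K ⥤ FreeModCat K where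
  obj A := ⟨twistMod p.1 A.obj, p.2 A.obj A.property⟩
  map ν := ObjectProperty.homMk (twistMap p.1 ν.hom)
  map_id _ := rfl
  map_comp _ _ := rfl

lemma twistF_comp (p q : {f : K →+* K // GoodTwist f}) (h : GoodTwist ((q.1).comp p.1)) :
    twistF q ⋙ twistF p = twistF ⟨(q.1).comp p.1, h⟩ := rfl

lemma twistF_id : twistF ⟨RingHom.id K, goodTwist_id⟩ = 𝟭 (FreeModCat K) := rfl

def twistSub (e : K ≃+* K) : {f : K →+* K // GoodTwist f} := ⟨(e : K →+* K), goodTwist_equiv e⟩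

/-- The automorphism of the category realizing `e`: its `hom` twists by `e.symm`. -/
def twistAut (e : K ≃+* K) : CatAut K where
  hom := (twistF (twistSub e.symm) : FreeModCat K ⥤ FreeModCat K).toCatHom
  inv := (twistF (twistSub e) : FreeModCat K ⥤ FreeModCat K).toCatHom
  hom_inv_id := by
    refine Cat.Hom.ext ?_
    show twistF (twistSub e.symm) ⋙ twistF (twistSub e) = 𝟭 (FreeModCat K)
    have h : ((twistSub (K := K) e.symm).1).comp (twistSub e).1 = RingHom.id K := by
      ext l; exact e.symm_apply_apply l
    rw [twistF_comp _ _ (h ▸ goodTwist_id), ← twistF_id]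
    congr 1
    exact Subtype.ext h
  inv_hom_id := by
    refine Cat.Hom.ext ?_
    show twistF (twistSub e) ⋙ twistF (twistSub e.symm) = 𝟭 (FreeModCat K)
    have h : ((twistSub (K := K) e).1).comp (twistSub e.symm).1 = RingHom.id K := by
      ext l; exact e.apply_symm_apply l
    rw [twistF_comp _ _ (h ▸ goodTwist_id), ← twistF_id]
    congr 1
    exact Subtype.ext h

end OutProof
namespace OutProof
variable {K : Type u} [Ring K]

/-! ### Semi-inner data -/

def SemiData (φ : FreeModCat K ⥤ FreeModCat K) (σ : K ≃+* K)
    (s : ∀ A : FreeModCat K, A.obj → (φ.obj A).obj) : Prop :=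
  (∀ A : FreeModCat K, Function.Bijective (s A)) ∧
  (∀ (A : FreeModCat K) (a a' : A.obj), s A (a + a') = s A a + s A a') ∧
  (∀ (A : FreeModCat K) (l : K) (a : A.obj), s A (l • a) = σ l • s A a) ∧
  (∀ (A B : FreeModCat K) (ν : A ⟶ B) (a : A.obj),
    (show (φ.obj A).obj ⟶ (φ.obj B).obj from (φ.map ν).hom) (s A a)
      = s B ((show A.obj ⟶ B.obj from ν.hom) a))

lemma isSemiInner_iff (φ : FreeModCat K ⥤ FreeModCat K) :
    IsSemiInner K φ ↔ ∃ σ s, SemiData φ σ s := Iff.rfl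

/-- The base object `K` of `C0`. -/
def unitObj (K : Type u) [Ring K] : FreeModCat K :=
  ⟨ModuleCat.of K K, inferInstanceAs (Module.Finite K K), inferInstanceAs (Module.Free K K)⟩

/-- Right multiplication as an endomorphism of `unitObj K`. -/
def rmul (c : K) : unitObj K ⟶ unitObj K :=
  ObjectProperty.homMk <| ModuleCat.ofHom <| show K →ₗ[K] K from
    { toFun := fun x => x * c
      map_add' := fun a b => add_mul a b c
      map_smul' := fun l x => by simp [smul_eq_mul, mul_assoc] }

/-- Key uniqueness: two semi-inner data for the same functor have σ's differing by an
inner automorphism. -/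
lemma semiData_unique {φ : FreeModCat K ⥤ FreeModCat K} {σ τ : K ≃+* K}
    {s t : ∀ A : FreeModCat K, A.obj → (φ.obj A).obj}
    (hs : SemiData φ σ s) (ht : SemiData φ τ t) :
    (σ : RingAut K)⁻¹ * (τ : RingAut K) ∈ innerRingAuts K := by
  obtain ⟨hsb, hsa, hss, hsn⟩ := hs
  obtain ⟨htb, hta, hts, htn⟩ := ht
  set A := unitObj K with hA
  let es : ((A.obj : Type u)) ≃ (((φ.obj A).obj : Type u)) := Equiv.ofBijective _ (hsb A)
  let r : K → K := fun a => es.symm (t A a)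
  have hr : ∀ a : K, s A (r a) = t A a := fun a => es.apply_symm_apply (t A a)
  have hinj : Function.Injective (s A) := (hsb A).injective
  have hrmul : ∀ a c : K, r (a * c) = r a * c := by
    intro a c
    apply hinj
    have h1 : (show (φ.obj A).obj ⟶ (φ.obj A).obj from (φ.map (rmul c)).hom)
        (t A a) = t A (a * c) := htn A A (rmul c) a
    have h2 : (show (φ.obj A).obj ⟶ (φ.obj A).obj from (φ.map (rmul c)).hom)
        (s A (r a)) = s A (r a * c) := hsn A A (rmul c) (r a)
    calc s A (r (a * c)) = t A (a * c) := hr _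
      _ = (show (φ.obj A).obj ⟶ (φ.obj A).obj from (φ.map (rmul c)).hom)
            (t A a) := h1.symm
      _ = (show (φ.obj A).obj ⟶ (φ.obj A).obj from (φ.map (rmul c)).hom)
            (s A (r a)) := by rw [hr]
      _ = s A (r a * c) := h2
  have hu : ∀ c : K, r c = r 1 * c := fun c => by
    have := hrmul 1 c; rwa [one_mul] at this
  have hrbij : Function.Bijective r := es.symm.bijective.comp (htb A)
  obtain ⟨w, hw⟩ := hrbij.2 1
  have huw : r 1 * w = 1 := by rw [← hu w]; exact hw
  have hmul_inj : Function.Injective (fun c : K => r 1 * c) := by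
    have hfr : (fun c : K => r 1 * c) = r := funext fun c => (hu c).symm
    rw [hfr]; exact hrbij.1
  have hwu : w * r 1 = 1 := by
    apply hmul_inj
    show r 1 * (w * r 1) = r 1 * 1
    rw [← mul_assoc, huw, one_mul, mul_one]
  -- semilinearity of r at 1
  have hsemi : ∀ l : K, σ.symm (τ l) * r 1 = r 1 * l := by
    intro l
    have h5 : t A l = τ l • t A (1 : K) :=
      (congrArg (t A) (mul_one l).symm).trans (hts A l (1 : K))
    have h6 : s A (σ.symm (τ l) * r 1) = σ (σ.symm (τ l)) • s A (r 1) :=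
      hss A (σ.symm (τ l)) (r 1)
    rw [RingEquiv.apply_symm_apply, hr 1] at h6
    have h7 : s A (σ.symm (τ l) * r 1) = s A (r l) := by
      rw [h6, hr l, h5]
    have h8 := hinj h7
    rw [hu l] at h8
    exact h8
  refine ⟨⟨r 1, w, huw, hwu⟩, fun a => ?_⟩
  show σ.symm (τ a) = r 1 * a * w
  calc σ.symm (τ a) = σ.symm (τ a) * (r 1 * w) := by rw [huw, mul_one]
    _ = (σ.symm (τ a) * r 1) * w := by rw [mul_assoc]
    _ = (r 1 * a) * w := by rw [hsemi a]

end OutProof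
namespace OutProof
variable {K : Type u} [Ring K]

lemma semiData_id : SemiData (𝟭 (FreeModCat K)) (RingEquiv.refl K) (fun _ a => a) :=
  ⟨fun _ => Function.bijective_id, fun _ _ _ => rfl, fun _ _ _ => rfl, fun _ _ _ _ => rfl⟩

lemma semiData_comp {φ ψ : FreeModCat K ⥤ FreeModCat K} {σ τ : K ≃+* K}
    {s : ∀ A : FreeModCat K, A.obj → (φ.obj A).obj}
    {t : ∀ A : FreeModCat K, A.obj → (ψ.obj A).obj}
    (hφ : SemiData φ σ s) (hψ : SemiData ψ τ t) :
    SemiData (ψ ⋙ φ) (τ.trans σ) (fun A a => s (ψ.obj A) (t A a)) := by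
  obtain ⟨hsb, hsa, hss, hsn⟩ := hφ
  obtain ⟨htb, hta, hts, htn⟩ := hψ
  refine ⟨fun A => (hsb _).comp (htb A), fun A a a' => by dsimp only; rw [hta, hsa],
    fun A l a => by dsimp only; rw [hts, hss]; rfl, fun A B ν a => ?_⟩
  have h1 : (show (φ.obj (ψ.obj A)).obj ⟶ (φ.obj (ψ.obj B)).obj from (φ.map (ψ.map ν)).hom)
      (s (ψ.obj A) (t A a)) = s (ψ.obj B)
        ((show (ψ.obj A).obj ⟶ (ψ.obj B).obj from (ψ.map ν).hom) (t A a)) :=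
    hsn (ψ.obj A) (ψ.obj B) (ψ.map ν) (t A a)
  have h2 : (show (ψ.obj A).obj ⟶ (ψ.obj B).obj from (ψ.map ν).hom) (t A a)
      = t B ((show A.obj ⟶ B.obj from ν.hom) a) := htn A B ν a
  calc (show (φ.obj (ψ.obj A)).obj ⟶ (φ.obj (ψ.obj B)).obj from (φ.map (ψ.map ν)).hom)
        (s (ψ.obj A) (t A a))
      = s (ψ.obj B) ((show (ψ.obj A).obj ⟶ (ψ.obj B).obj from (ψ.map ν).hom) (t A a)) := h1
    _ = s (ψ.obj B) (t B ((show A.obj ⟶ B.obj from ν.hom) a)) := by rw [h2]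

/-- The twist functor by `e.symm` carries semi-inner data with ring automorphism `e`. -/
lemma semiData_twist (e : K ≃+* K) :
    SemiData (twistAut e).hom.toFunctor e (fun _ a => a) := by
  refine ⟨fun _ => Function.bijective_id, fun _ _ _ => rfl, fun A l a => ?_, fun _ _ _ _ => rfl⟩
  dsimp only
  show l • a = e.symm (e l) • a
  rw [e.symm_apply_apply]

end OutProof
namespace OutProof
variable {K : Type u} [Ring K]

lemma app_inv_app {φ ψ : FreeModCat K ⥤ FreeModCat K} (i : φ ≅ ψ) (A : FreeModCat K)
    (a : (φ.obj A).obj) :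
    (show (ψ.obj A).obj ⟶ (φ.obj A).obj from (i.inv.app A).hom)
      ((show (φ.obj A).obj ⟶ (ψ.obj A).obj from (i.hom.app A).hom) a) = a := by
  have h1 : (i.hom.app A ≫ i.inv.app A : φ.obj A ⟶ φ.obj A) = 𝟙 (φ.obj A) :=
    i.hom_inv_id_app A
  exact ConcreteCategory.congr_hom
    (show ((show (φ.obj A).obj ⟶ (ψ.obj A).obj from (i.hom.app A).hom) ≫
        (show (ψ.obj A).obj ⟶ (φ.obj A).obj from (i.inv.app A).hom)
          : (φ.obj A).obj ⟶ (φ.obj A).obj) = 𝟙 ((φ.obj A).obj) from congrArg InducedCategory.Hom.hom h1) a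

lemma inv_app_app {φ ψ : FreeModCat K ⥤ FreeModCat K} (i : φ ≅ ψ) (A : FreeModCat K)
    (a : (ψ.obj A).obj) :
    (show (φ.obj A).obj ⟶ (ψ.obj A).obj from (i.hom.app A).hom)
      ((show (ψ.obj A).obj ⟶ (φ.obj A).obj from (i.inv.app A).hom) a) = a := by
  have h1 : (i.inv.app A ≫ i.hom.app A : ψ.obj A ⟶ ψ.obj A) = 𝟙 (ψ.obj A) :=
    i.inv_hom_id_app A
  exact ConcreteCategory.congr_hom
    (show ((show (ψ.obj A).obj ⟶ (φ.obj A).obj from (i.inv.app A).hom) ≫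
        (show (φ.obj A).obj ⟶ (ψ.obj A).obj from (i.hom.app A).hom)
          : (ψ.obj A).obj ⟶ (ψ.obj A).obj) = 𝟙 ((ψ.obj A).obj) from congrArg InducedCategory.Hom.hom h1) a

lemma semiData_of_iso {φ ψ : FreeModCat K ⥤ FreeModCat K} {σ : K ≃+* K}
    {s : ∀ A : FreeModCat K, A.obj → (φ.obj A).obj}
    (h : SemiData φ σ s) (i : φ ≅ ψ) :
    SemiData ψ σ
      (fun A a => (show (φ.obj A).obj ⟶ (ψ.obj A).obj from (i.hom.app A).hom) (s A a)) := by
  obtain ⟨hb, ha, hsm, hn⟩ := h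
  refine ⟨fun A => ?_, fun A a a' => ?_, fun A l a => ?_, fun A B ν a => ?_⟩
  · refine Function.Bijective.comp ?_ (hb A)
    exact Function.bijective_iff_has_inverse.mpr
      ⟨_, fun a => app_inv_app i A a, fun a => inv_app_app i A a⟩
  · dsimp only; rw [ha, map_add]
  · dsimp only; rw [hsm, map_smul]
  · dsimp only
    -- naturality of i : φ.map ν ≫ i.hom.app B = i.hom.app A ≫ ψ.map ν
    have h1 : (φ.map ν ≫ i.hom.app B : φ.obj A ⟶ ψ.obj B)
        = (i.hom.app A ≫ ψ.map ν : φ.obj A ⟶ ψ.obj B) := i.hom.naturality ν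
    have h2 := ConcreteCategory.congr_hom
      (show ((show (φ.obj A).obj ⟶ (φ.obj B).obj from (φ.map ν).hom) ≫
          (show (φ.obj B).obj ⟶ (ψ.obj B).obj from (i.hom.app B).hom)
            : (φ.obj A).obj ⟶ (ψ.obj B).obj)
        = ((show (φ.obj A).obj ⟶ (ψ.obj A).obj from (i.hom.app A).hom) ≫
          (show (ψ.obj A).obj ⟶ (ψ.obj B).obj from (ψ.map ν).hom)
            : (φ.obj A).obj ⟶ (ψ.obj B).obj) from congrArg InducedCategory.Hom.hom h1) (s A a)
    -- h2 : i.hom.app B (φ.map ν (s A a)) = ψ.map ν (i.hom.app A (s A a))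
    have h3 : (show (φ.obj A).obj ⟶ (φ.obj B).obj from (φ.map ν).hom) (s A a)
        = s B ((show A.obj ⟶ B.obj from ν.hom) a) := hn A B ν a
    calc (show (ψ.obj A).obj ⟶ (ψ.obj B).obj from (ψ.map ν).hom)
          ((show (φ.obj A).obj ⟶ (ψ.obj A).obj from (i.hom.app A).hom) (s A a))
        = (show (φ.obj B).obj ⟶ (ψ.obj B).obj from (i.hom.app B).hom)
            ((show (φ.obj A).obj ⟶ (φ.obj B).obj from (φ.map ν).hom) (s A a)) := h2.symm
      _ = (show (φ.obj B).obj ⟶ (ψ.obj B).obj from (i.hom.app B).hom)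
            (s B ((show A.obj ⟶ B.obj from ν.hom) a)) := by rw [h3]

end OutProof
namespace OutProof
variable {K : Type u} [Ring K]

/-- If the ring automorphism of a semi-inner datum is inner, the functor is isomorphic to the
identity. -/
noncomputable def isoOfInner {φ : FreeModCat K ⥤ FreeModCat K} {σ : K ≃+* K}
    {s : ∀ A : FreeModCat K, A.obj → (φ.obj A).obj}
    (h : SemiData φ σ s) (u : Kˣ) (hu : ∀ a : K, σ a = ↑u * a * ↑u⁻¹) :
    φ ≅ 𝟭 (FreeModCat K) := by
  obtain ⟨hb, ha, hsm, hn⟩ := h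
  -- the corrected components
  let tl : ∀ A : FreeModCat K, (A.obj : Type u) →ₗ[K] ((φ.obj A).obj : Type u) := fun A =>
    { toFun := fun a => (↑u⁻¹ : K) • s A a
      map_add' := fun a a' => by rw [ha, smul_add]
      map_smul' := fun l a => by
        rw [hsm, smul_smul, smul_smul, hu l]
        congr 1
        calc (↑u⁻¹ : K) * (↑u * l * ↑u⁻¹) = (↑u⁻¹ * ↑u) * (l * ↑u⁻¹) := by
              simp only [mul_assoc]
          _ = l * ↑u⁻¹ := by rw [u.inv_mul, one_mul] }
  have tbij : ∀ A : FreeModCat K, Function.Bijective (tl A) := by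
    intro A
    have h1 : Function.Bijective (fun y : ((φ.obj A).obj : Type u) => (↑u⁻¹ : K) • y) := by
      constructor
      · intro x y hxy
        have h2 := congrArg (fun z : ((φ.obj A).obj : Type u) => (↑u : K) • z) hxy
        dsimp only at h2
        rwa [smul_smul, smul_smul, u.mul_inv, one_smul, one_smul] at h2
      · intro y
        refine ⟨(↑u : K) • y, ?_⟩
        dsimp only
        rw [smul_smul, u.inv_mul, one_smul]
    exact h1.comp (hb A)
  let te : ∀ A : FreeModCat K, (A.obj : Type u) ≃ₗ[K] ((φ.obj A).obj : Type u) := fun A =>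
    LinearEquiv.ofBijective (tl A) (tbij A)
  refine Iso.symm (NatIso.ofComponents (fun A => ?_) ?_)
  · exact
      { hom := ObjectProperty.homMk (ModuleCat.ofHom (te A).toLinearMap)
        inv := ObjectProperty.homMk (ModuleCat.ofHom (te A).symm.toLinearMap)
        hom_inv_id := by
          refine InducedCategory.hom_ext (ModuleCat.hom_ext (LinearMap.ext fun a => ?_)); exact (te A).symm_apply_apply a
        inv_hom_id := by
          refine InducedCategory.hom_ext (ModuleCat.hom_ext (LinearMap.ext fun a => ?_)); exact (te A).apply_symm_apply a }
  · intro A B ν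
    refine InducedCategory.hom_ext (ModuleCat.hom_ext (LinearMap.ext fun a => ?_))
    show (↑u⁻¹ : K) • s B ((show A.obj ⟶ B.obj from ν.hom) a)
      = (show (φ.obj A).obj ⟶ (φ.obj B).obj from (φ.map ν).hom) ((↑u⁻¹ : K) • s A a)
    rw [map_smul, hn A B ν a]

end OutProof
namespace OutProof
variable {K : Type u} [Ring K]

lemma mk_eq_mk_of_data {φ : FreeModCat K ⥤ FreeModCat K} {σ τ : K ≃+* K}
    {s : ∀ A : FreeModCat K, A.obj → (φ.obj A).obj}
    {t : ∀ A : FreeModCat K, A.obj → (φ.obj A).obj}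
    (hs : SemiData φ σ s) (ht : SemiData φ τ t) :
    (QuotientGroup.mk σ : RingAut K ⧸ innerRingAuts K) = QuotientGroup.mk τ :=
  (QuotientGroup.eq).mpr (semiData_unique hs ht)

end OutProof

open OutProof

/-- If every automorphism of the category `C0` of finitely generated free left
`K`-modules is semi-inner, then the group `Out C0 = Aut C0 / Int C0` of outer automorphisms of
the category `C0` is isomorphic to the group `Out K = Aut K / Int K` of outer automorphisms of
the ring `K`. -/
theorem outCat_mulEquiv_outRing
    (K : Type u) [Ring K]
    (hsemi : ∀ F : CatAut K, IsSemiInner K F.hom.toFunctor) :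
    Nonempty ((CatAut K ⧸ innerCatAuts K) ≃* (RingAut K ⧸ innerRingAuts K)) := by
  classical
  have hsemi' : ∀ F : CatAut K, ∃ σ s,
      SemiData F.hom.toFunctor σ s := fun F => hsemi F
  choose sig sfun hdat using hsemi'
  have hmul : ∀ F G : CatAut K,
      (QuotientGroup.mk (sig (F * G)) : RingAut K ⧸ innerRingAuts K)
        = QuotientGroup.mk (sig F) * QuotientGroup.mk (sig G) := by
    intro F G
    have hcomp : SemiData (F * G).hom.toFunctor
        ((sig G).trans (sig F))
        (fun A a => sfun F (G.hom.toFunctor.obj A) (sfun G A a)) :=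
      semiData_comp (hdat F) (hdat G)
    rw [← QuotientGroup.mk_mul]
    exact mk_eq_mk_of_data (hdat (F * G))
      ((show (sig F) * (sig G) = (sig G).trans (sig F) from rfl) ▸ hcomp)
  let Φ : CatAut K →* RingAut K ⧸ innerRingAuts K :=
    MonoidHom.mk' (fun F : CatAut K => (QuotientGroup.mk (sig F) : _)) hmul
  have hsurj : Function.Surjective Φ := by
    intro q
    induction q using QuotientGroup.induction_on with
    | H σ =>
      refine ⟨twistAut σ, ?_⟩
      show (QuotientGroup.mk (sig (twistAut σ)) : RingAut K ⧸ innerRingAuts K)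
        = QuotientGroup.mk σ
      exact mk_eq_mk_of_data (hdat _) (semiData_twist σ)
  have hker : Φ.ker = innerCatAuts K := by
    ext F
    constructor
    · intro hF
      have h0 : (QuotientGroup.mk (sig F) : RingAut K ⧸ innerRingAuts K) = 1 := hF
      have h1 : sig F ∈ innerRingAuts K := (QuotientGroup.eq_one_iff _).mp h0
      obtain ⟨u, hu⟩ := h1
      exact ⟨isoOfInner (hdat F) u hu⟩
    · rintro ⟨i⟩
      show (QuotientGroup.mk (sig F) : RingAut K ⧸ innerRingAuts K) = 1
      rw [QuotientGroup.eq_one_iff]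
      have h2 := semiData_of_iso (hdat F) i
      have h3 := semiData_unique semiData_id h2
      have h4 : ((RingEquiv.refl K : RingAut K))⁻¹ * (sig F) = sig F := by
        rw [show (RingEquiv.refl K : RingAut K) = 1 from rfl, inv_one, one_mul]
      rwa [h4] at h3
  exact ⟨(QuotientGroup.quotientMulEquivOfEq hker.symm).trans
    (QuotientGroup.quotientKerEquivOfSurjective Φ hsurj)⟩
end

section
/- Let K be an infinite field, W the free Lie algebra over K on two generators x and y, and T a characteristic automorphism of End(W). Let σ ∈ End(W) be the idempotent endomorphism determined by σ(x) = x and σ(y) = 0. Then T(σ) is an L-endomorphism of W, i.e. T(σ)(x) and T(σ)(y) lie in the K-linear span of x and y. -/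
noncomputable section

open FreeLieAlgebra

/-- The free Lie algebra over `K` on the two generators `x = of K 0` and `y = of K 1`. -/
abbrev LieW (K : Type*) [Field K] := FreeLieAlgebra K (Fin 2)

/-- The monoid (under composition) of Lie algebra endomorphisms of the free Lie algebra on two
generators. -/
abbrev LieEnd (K : Type*) [Field K] := LieW K →ₗ⁅K⁆ LieW K

instance (K : Type*) [Field K] : Monoid (LieEnd K) where
  mul f g := f.comp g
  one := LieHom.id
  mul_assoc f g h := rfl
  one_mul f := by ext w; rfl
  mul_one f := by ext w; rfl

@[simp] theorem LieEnd.mul_def {K : Type*} [Field K] (f g : LieEnd K) : f * g = f.comp g := rfl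
@[simp] theorem LieEnd.one_def {K : Type*} [Field K] : (1 : LieEnd K) = LieHom.id := rfl

/-- The endomorphism `τ_λ` of the free Lie algebra on two generators, determined by
`τ_λ x = λ • x` and `τ_λ y = λ • y`.  For `λ ≠ 0` it is an automorphism. -/
def lieTau (K : Type*) [Field K] (l : K) : LieEnd K :=
  FreeLieAlgebra.lift K fun i => l • FreeLieAlgebra.of K i

/-- An endomorphism `σ` of the free Lie algebra `W` on the two generators `x, y` is an
`L`-endomorphism if `σ x` and `σ y` lie in the `K`-linear span of `x` and `y`. -/
def IsLEndo {K : Type*} [Field K] (σ : LieEnd K) : Prop :=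
  ∀ i : Fin 2, σ (FreeLieAlgebra.of K i) ∈
    Submodule.span K ({FreeLieAlgebra.of K 0, FreeLieAlgebra.of K 1} : Set (LieW K))

/-- A monoid automorphism `T` of `End W` is characteristic if there is a multiplicative
homomorphism `χ : Aut W →* K*` with `T ξ = τ_{χ ξ} ∘ ξ` for every automorphism `ξ` of `W`. -/
def IsCharacteristic {K : Type*} [Field K] (T : MulAut (LieEnd K)) : Prop :=
  ∃ χ : (LieEnd K)ˣ →* Kˣ, ∀ ξ : (LieEnd K)ˣ, T ↑ξ = lieTau K ↑(χ ξ) * ↑ξ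

namespace CharAux

variable {K : Type*} [Field K]

/-- The diagonal endomorphism `x ↦ a • x`, `y ↦ b • y`. -/
def E (K : Type*) [Field K] (a b : K) : LieEnd K :=
  FreeLieAlgebra.lift K fun i : Fin 2 => if i = 0 then a • of K 0 else b • of K 1

@[simp] lemma E_of (a b : K) (i : Fin 2) :
    E K a b (of K i) = if i = 0 then a • of K 0 else b • of K 1 :=
  lift_of_apply _ _

lemma E_mul (a b c d : K) : E K a b * E K c d = E K (a * c) (b * d) := by
  rw [LieEnd.mul_def]
  apply FreeLieAlgebra.hom_ext
  intro i
  fin_cases i <;> simp [smul_smul, mul_comm]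

lemma E_one : E K 1 1 = 1 := by
  rw [LieEnd.one_def]
  apply FreeLieAlgebra.hom_ext
  intro i
  fin_cases i <;> simp

lemma lieTau_eq (l : K) : lieTau K l = E K l l := by
  apply FreeLieAlgebra.hom_ext
  intro i
  fin_cases i <;> simp [lieTau, lift_of_apply]

lemma sigma_eq :
    (FreeLieAlgebra.lift K fun i : Fin 2 =>
      if i = 0 then FreeLieAlgebra.of K (0 : Fin 2) else 0) = E K 1 0 := by
  apply FreeLieAlgebra.hom_ext
  intro i
  fin_cases i <;> simp [lift_of_apply]

/-- The free Lie algebra is generated as a Lie algebra by its generators. -/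
lemma lieSpan_range_of_eq_top :
    LieSubalgebra.lieSpan K (LieW K) (Set.range (of K)) = ⊤ := by
  rw [eq_top_iff]
  rintro w -
  set S := LieSubalgebra.lieSpan K (LieW K) (Set.range (of K)) with hS
  let p : LieW K →ₗ⁅K⁆ S :=
    FreeLieAlgebra.lift K fun i => ⟨of K i, LieSubalgebra.subset_lieSpan ⟨i, rfl⟩⟩
  have h : S.incl.comp p = LieHom.id := by
    apply FreeLieAlgebra.hom_ext
    intro i
    simp [p, lift_of_apply]
  have h2 : S.incl (p w) = w := by
    have := DFunLike.congr_fun h w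
    simpa using this
  rw [← h2]
  exact (p w).2

/-- Elements homogeneous of some degree for a family of endomorphisms. -/
def Hg (F : K → LieEnd K) : Set (LieW K) :=
  {h | ∃ n : ℕ, ∀ l : K, F l h = l ^ n • h}

lemma span_hg_eq_top (F : K → LieEnd K) (hF : ∀ i, of K i ∈ Hg F) :
    Submodule.span K (Hg F) = ⊤ := by
  have hlie : ∀ x ∈ Submodule.span K (Hg F), ∀ y ∈ Submodule.span K (Hg F),
      ⁅x, y⁆ ∈ Submodule.span K (Hg F) := by
    intro x hx y hy
    induction hx, hy using Submodule.span_induction₂ with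
    | mem_mem u v hu hv =>
      obtain ⟨n, hn⟩ := hu
      obtain ⟨m, hm⟩ := hv
      refine Submodule.subset_span ⟨n + m, fun l => ?_⟩
      rw [LieHom.map_lie, hn l, hm l, smul_lie,
        lie_smul (R := K) (L := LieW K) (M := LieW K) (l ^ m) u v, smul_smul, ← pow_add]
    | zero_left v hv => rw [zero_lie]; exact Submodule.zero_mem _
    | zero_right u hu => rw [lie_zero]; exact Submodule.zero_mem _
    | add_left u v z hu hv hz h1 h2 => rw [add_lie]; exact Submodule.add_mem _ h1 h2
    | add_right u v z hu hv hz h1 h2 => rw [lie_add]; exact Submodule.add_mem _ h1 h2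
    | smul_left a u v hu hv h1 => rw [smul_lie]; exact Submodule.smul_mem _ _ h1
    | smul_right a u v hu hv h1 => rw [lie_smul]; exact Submodule.smul_mem _ _ h1
  let S : LieSubalgebra K (LieW K) :=
    { Submodule.span K (Hg F) with
      lie_mem' := fun {x y} hx hy => hlie x hx y hy }
  have htop : (⊤ : LieSubalgebra K (LieW K)) ≤ S := by
    rw [← lieSpan_range_of_eq_top]
    rw [LieSubalgebra.lieSpan_le]
    rintro _ ⟨i, rfl⟩
    exact Submodule.subset_span (hF i)
  rw [eq_top_iff]
  intro x _
  exact htop (LieSubalgebra.mem_top x)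

lemma sum_pad {N M : ℕ} (h : N ≤ M) (c : ℕ → LieW K) (l : K) :
    ∑ i ∈ Finset.range N, l ^ i • c i =
      ∑ i ∈ Finset.range M, l ^ i • (if i < N then c i else 0) := by
  have h1 : ∀ i ∈ Finset.range N, l ^ i • c i = l ^ i • (if i < N then c i else 0) := by
    intro i hi
    rw [if_pos (Finset.mem_range.mp hi)]
  rw [Finset.sum_congr rfl h1]
  exact Finset.sum_subset (Finset.range_subset_range.mpr h)
    (fun i _ hi => by rw [if_neg (by simpa using hi), smul_zero])

lemma polyfam (F : K → LieEnd K) (hF : ∀ i, of K i ∈ Hg F) (w : LieW K) :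
    ∃ N, ∃ c : ℕ → LieW K, ∀ l : K, F l w = ∑ i ∈ Finset.range N, l ^ i • c i := by
  have hw : w ∈ Submodule.span K (Hg F) := by
    rw [span_hg_eq_top F hF]; trivial
  induction hw using Submodule.span_induction with
  | mem h hh =>
    obtain ⟨n, hn⟩ := hh
    refine ⟨n + 1, fun i => if i = n then h else 0, fun l => ?_⟩
    have h1 : ∀ i, (l ^ i • if i = n then h else 0) = if i = n then l ^ i • h else 0 := by
      intro i; split <;> simp
    rw [hn l, Finset.sum_congr rfl fun i _ => h1 i,
      Finset.sum_ite_eq' (Finset.range (n + 1)) n (fun i => l ^ i • h),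
      if_pos (Finset.self_mem_range_succ n)]
  | zero => exact ⟨0, 0, by simp⟩
  | add x y hx hy ihx ihy =>
    obtain ⟨N₁, c₁, h₁⟩ := ihx
    obtain ⟨N₂, c₂, h₂⟩ := ihy
    refine ⟨max N₁ N₂,
      fun i => (if i < N₁ then c₁ i else 0) + (if i < N₂ then c₂ i else 0), fun l => ?_⟩
    rw [map_add, h₁ l, h₂ l, sum_pad (le_max_left N₁ N₂) c₁ l,
      sum_pad (le_max_right N₁ N₂) c₂ l, ← Finset.sum_add_distrib]
    exact Finset.sum_congr rfl fun i _ => (smul_add _ _ _).symm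
  | smul a x hx ih =>
    obtain ⟨N, c, hc⟩ := ih
    refine ⟨N, fun i => a • c i, fun l => ?_⟩
    rw [map_smul, hc l, Finset.smul_sum]
    exact Finset.sum_congr rfl fun i _ => smul_comm _ _ _

lemma fixed_imp [Infinite K] (F : K → LieEnd K) (hF : ∀ i, of K i ∈ Hg F) (w : LieW K)
    (hw : ∀ l : K, l ≠ 0 → F l w = w) : F 0 w = w := by
  obtain ⟨N, c, hc⟩ := polyfam F hF w
  set M := N + 1 with hM
  set c' : ℕ → LieW K := fun i => if i < N then c i else 0 with hc'
  have hMc : ∀ l : K, F l w = ∑ i ∈ Finset.range M, l ^ i • c' i := fun l => by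
    rw [hc l, sum_pad (Nat.le_succ N)]
  set d : ℕ → LieW K := fun i => c' i - (if i = 0 then w else 0) with hd
  have hzero : ∀ l : K, l ≠ 0 → ∑ i ∈ Finset.range M, l ^ i • d i = 0 := by
    intro l hl
    have h1 : ∑ i ∈ Finset.range M, l ^ i • (if i = 0 then w else 0) = w := by
      have he : ∀ i, (l ^ i • if i = 0 then w else 0) = if i = 0 then l ^ i • w else 0 := by
        intro i; split <;> simp
      rw [Finset.sum_congr rfl fun i _ => he i,
        Finset.sum_ite_eq' (Finset.range M) 0 (fun i => l ^ i • w),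
        if_pos (by simp [hM]), pow_zero, one_smul]
    have h2 : ∑ i ∈ Finset.range M, l ^ i • d i =
        (∑ i ∈ Finset.range M, l ^ i • c' i) -
          ∑ i ∈ Finset.range M, l ^ i • (if i = 0 then w else 0) := by
      rw [← Finset.sum_sub_distrib]
      exact Finset.sum_congr rfl fun i _ => (smul_sub _ _ _)
    rw [h2, h1, ← hMc l, hw l hl, sub_self]
  have hd0 : d 0 = 0 := by
    rw [← Module.forall_dual_apply_eq_zero_iff K]
    intro φ
    set p : Polynomial K :=
      ∑ i ∈ Finset.range M, Polynomial.C (φ (d i)) * Polynomial.X ^ i with hp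
    have hroot : ∀ l : K, l ≠ 0 → p.IsRoot l := by
      intro l hl
      have h3 := congrArg φ (hzero l hl)
      simp only [map_sum, map_smul, map_zero, smul_eq_mul] at h3
      simp only [Polynomial.IsRoot, hp, Polynomial.eval_finset_sum, Polynomial.eval_mul,
        Polynomial.eval_C, Polynomial.eval_pow, Polynomial.eval_X]
      rw [← h3]
      exact Finset.sum_congr rfl fun i _ => mul_comm _ _
    have hp0 : p = 0 := by
      refine Polynomial.eq_zero_of_infinite_isRoot p ?_
      refine Set.Infinite.mono ?_ (Set.Finite.infinite_compl (Set.finite_singleton (0 : K)))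
      intro l hl
      exact hroot l hl
    have h4 := congrArg (fun q => Polynomial.coeff q 0) hp0
    simp only [hp, Polynomial.finset_sum_coeff, Polynomial.coeff_zero,
      Polynomial.coeff_C_mul, Polynomial.coeff_X_pow] at h4
    rw [Finset.sum_eq_single 0 (fun i _ hi => by simp [Ne.symm hi])
      (fun h => absurd (by simp [hM] : (0 : ℕ) ∈ Finset.range M) h)] at h4
    simpa using h4
  have h5 : F 0 w = c' 0 := by
    rw [hMc 0, Finset.sum_eq_single 0
      (fun i _ hi => by rw [zero_pow hi, zero_smul])
      (fun h => absurd (by simp [hM] : (0 : ℕ) ∈ Finset.range M) h)]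
    simp
  have h6 : c' 0 = w := by
    have := hd0
    simp only [hd, if_pos rfl] at this
    exact sub_eq_zero.mp this
  rw [h5, h6]

/-- The span of a single generator is a Lie subalgebra (abelian). -/
def spanSingle (k : Fin 2) : LieSubalgebra K (LieW K) :=
  { Submodule.span K {of K k} with
    lie_mem' := by
      intro x y hx hy
      replace hx : x ∈ Submodule.span K ({of K k} : Set (LieW K)) := hx
      replace hy : y ∈ Submodule.span K ({of K k} : Set (LieW K)) := hy
      rw [Submodule.mem_span_singleton] at hx hy
      obtain ⟨a, rfl⟩ := hx
      obtain ⟨b, rfl⟩ := hy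
      rw [smul_lie, lie_smul (R := K) (L := LieW K) (M := LieW K) b (of K k) (of K k),
        lie_self, smul_zero, smul_zero]
      show (0 : LieW K) ∈ Submodule.span K ({of K k} : Set (LieW K))
      exact Submodule.zero_mem _ }

lemma mem_span_single (j k : Fin 2) (hjk : j ≠ k) (G : LieEnd K)
    (hG : ∀ i, G (of K i) = if i = j then 0 else of K i) (w : LieW K) :
    G w ∈ Submodule.span K ({of K k} : Set (LieW K)) := by
  have h1 : LieSubalgebra.lieSpan K (LieW K) (Set.range (of K)) ≤
      (spanSingle k).comap G := by
    rw [LieSubalgebra.lieSpan_le]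
    rintro _ ⟨i, rfl⟩
    show G (of K i) ∈ spanSingle k
    rw [hG i]
    split
    · exact Submodule.zero_mem _
    · have : i = k := by omega
      rw [this]
      exact Submodule.mem_span_singleton_self _
  have h2 : w ∈ (spanSingle k).comap G := by
    apply h1
    rw [lieSpan_range_of_eq_top]
    exact LieSubalgebra.mem_top w
  exact h2

lemma key [Infinite K] (F : K → LieEnd K) (j k : Fin 2) (hjk : j ≠ k)
    (hF : ∀ (l : K) (i : Fin 2), F l (of K i) = l ^ (if i = j then 1 else 0) • of K i)
    (w : LieW K) (hw : ∀ l : K, l ≠ 0 → F l w = w) :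
    w ∈ Submodule.span K ({of K k} : Set (LieW K)) := by
  have hHg : ∀ i, of K i ∈ Hg F := fun i => ⟨if i = j then 1 else 0, fun l => hF l i⟩
  have h0 : F 0 w = w := fixed_imp F hHg w hw
  rw [← h0]
  refine mem_span_single j k hjk (F 0) (fun i => ?_) w
  rw [hF 0 i]
  split <;> simp

end CharAux

open CharAux in
/-- Over an infinite field, let `T` be a characteristic automorphism of the
endomorphism monoid of the free Lie algebra on the generators `x, y` and let `σ` be the
idempotent endomorphism with `σ x = x`, `σ y = 0`.  Then `T σ` is an `L`-endomorphism, i.e.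
`T σ x` and `T σ y` lie in the linear span of `x` and `y`. -/
theorem characteristic_aut_idempotent_is_LEndo (K : Type*) [Field K] [Infinite K]
    (T : MulAut (LieEnd K)) (hT : IsCharacteristic T) :
    IsLEndo (T (FreeLieAlgebra.lift K fun i : Fin 2 =>
      if i = 0 then FreeLieAlgebra.of K (0 : Fin 2) else 0)) := by
  obtain ⟨χ, hχ⟩ := hT
  rw [sigma_eq]
  set f : LieEnd K := T (E K 1 0) with hf
  -- the basic relations coming from invertible diagonal endomorphisms
  have hfix : ∀ l : K, l ≠ 0 → ∃ c : K, c ≠ 0 ∧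
      (∀ v, E K c (c * l) (f v) = f v) ∧
      c • f (of K 0) = f (of K 0) ∧ (c * l) • f (of K 1) = f (of K 1) := by
    intro l hl
    set u : (LieEnd K)ˣ :=
      ⟨E K 1 l, E K 1 l⁻¹,
        by rw [E_mul, one_mul, mul_inv_cancel₀ hl, E_one],
        by rw [E_mul, one_mul, inv_mul_cancel₀ hl, E_one]⟩ with hu
    set c : K := ↑(χ u) with hcdef
    have hTu : T (E K 1 l) = E K c (c * l) := by
      have := hχ u
      rw [show ((u : (LieEnd K)ˣ) : LieEnd K) = E K 1 l from rfl] at this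
      rw [this, lieTau_eq, E_mul, mul_one]
    have rel1 : E K 1 l * E K 1 0 = E K 1 0 := by
      rw [E_mul, one_mul, mul_zero]
    have rel2 : E K 1 0 * E K 1 l = E K 1 0 := by
      rw [E_mul, one_mul, zero_mul]
    have Trel1 : E K c (c * l) * f = f := by
      have := congrArg T rel1
      rw [map_mul, hTu] at this
      exact this
    have Trel2 : f * E K c (c * l) = f := by
      have := congrArg T rel2
      rw [map_mul, hTu] at this
      exact this
    refine ⟨c, Units.ne_zero _, ?_, ?_, ?_⟩
    · intro v
      have := DFunLike.congr_fun Trel1 v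
      simpa using this
    · have := DFunLike.congr_fun Trel2 (of K 0)
      simp only [LieEnd.mul_def, LieHom.comp_apply, E_of] at this
      simpa using this
    · have := DFunLike.congr_fun Trel2 (of K 1)
      simp only [LieEnd.mul_def, LieHom.comp_apply, E_of] at this
      simpa using this
  intro i
  have hi : i = 0 ∨ i = 1 := by omega
  have hsub0 : Submodule.span K ({of K (0 : Fin 2)} : Set (LieW K)) ≤
      Submodule.span K ({of K 0, of K 1} : Set (LieW K)) :=
    Submodule.span_mono (by simp)
  have hsub1 : Submodule.span K ({of K (1 : Fin 2)} : Set (LieW K)) ≤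
      Submodule.span K ({of K 0, of K 1} : Set (LieW K)) :=
    Submodule.span_mono (by simp)
  by_cases hfx : f (of K 0) = 0
  · -- x-part is zero; analyze y
    by_cases hfy : f (of K 1) = 0
    · rcases hi with rfl | rfl
      · rw [hfx]; exact Submodule.zero_mem _
      · rw [hfy]; exact Submodule.zero_mem _
    · -- c * l = 1 for every l, so f y is fixed by E μ 1 for all μ ≠ 0
      have hEfix : ∀ μ : K, μ ≠ 0 → E K μ 1 (f (of K 1)) = f (of K 1) := by
        intro μ hμ
        obtain ⟨c, hc0, hleft, hx, hy⟩ := hfix μ⁻¹ (inv_ne_zero hμ)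
        have hcl : c * μ⁻¹ = 1 := by
          by_contra hne
          apply hfy
          have : (c * μ⁻¹ - 1) • f (of K 1) = 0 := by
            rw [sub_smul, one_smul, hy, sub_self]
          rcases smul_eq_zero.mp this with h | h
          · exact absurd (sub_eq_zero.mp h) hne
          · exact h
        have hcμ : c = μ := by
          field_simp at hcl
          exact hcl
        have := hleft (of K 1)
        rw [hcμ, mul_inv_cancel₀ hμ] at this
        exact this
      have := key (fun μ => E K μ 1) 0 1 (by decide)
        (fun l i => by fin_cases i <;> simp) (f (of K 1)) hEfix
      rcases hi with rfl | rfl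
      · rw [hfx]; exact Submodule.zero_mem _
      · exact hsub1 this
  · -- f x ≠ 0 forces c = 1 for every l
    have hc1 : ∀ l : K, l ≠ 0 → ∀ v, E K 1 l (f v) = f v := by
      intro l hl v
      obtain ⟨c, hc0, hleft, hx, hy⟩ := hfix l hl
      have hceq : c = 1 := by
        have : (c - 1) • f (of K 0) = 0 := by
          rw [sub_smul, one_smul, hx, sub_self]
        rcases smul_eq_zero.mp this with h | h
        · exact sub_eq_zero.mp h
        · exact absurd h hfx
      have := hleft v
      rw [hceq, one_mul] at this
      exact this
    -- f y must vanish: pick l ∉ {0, 1}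
    have hfin : ({0, 1} : Set K).Finite := (Set.finite_singleton 1).insert 0
    obtain ⟨l₀, hl₀⟩ := hfin.infinite_compl.nonempty
    simp only [Set.mem_compl_iff, Set.mem_insert_iff, Set.mem_singleton_iff, not_or] at hl₀
    have hfy : f (of K 1) = 0 := by
      obtain ⟨c, hc0, hleft, hx, hy⟩ := hfix l₀ hl₀.1
      have hceq : c = 1 := by
        have : (c - 1) • f (of K 0) = 0 := by
          rw [sub_smul, one_smul, hx, sub_self]
        rcases smul_eq_zero.mp this with h | h
        · exact sub_eq_zero.mp h
        · exact absurd h hfx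
      rw [hceq, one_mul] at hy
      have : (l₀ - 1) • f (of K 1) = 0 := by
        rw [sub_smul, one_smul, hy, sub_self]
      rcases smul_eq_zero.mp this with h | h
      · exact absurd (sub_eq_zero.mp h) hl₀.2
      · exact h
    have hxmem := key (fun l => E K 1 l) 1 0 (by decide)
      (fun l i => by fin_cases i <;> simp) (f (of K 0))
      (fun l hl => hc1 l hl (of K 0))
    rcases hi with rfl | rfl
    · exact hsub0 hxmem
    · rw [hfy]; exact Submodule.zero_mem _
end
end

section
/- Let K be an infinite field, W the free Lie algebra over K on two generators x and y, and T a characteristic automorphism of End(W) which acts identically on the subsemigroup of L-endomorphisms (T(σ) = σ for every L-endomorphism σ). Then there exists λ ∈ K, λ ≠ 0, such that T(σ) = τ_λ^{-1} ∘ σ ∘ τ_λ for every σ ∈ End(W). -/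
noncomputable section

open FreeLieAlgebra

namespace Stmt13

variable {K : Type*} [Field K]

/-- The generator set. -/
def genSet (K : Type*) [Field K] : Set (LieW K) :=
  {FreeLieAlgebra.of K 0, FreeLieAlgebra.of K 1}

lemma of0_mem_span : FreeLieAlgebra.of K (0 : Fin 2) ∈ Submodule.span K (genSet K) :=
  Submodule.subset_span (Set.mem_insert _ _)

lemma of1_mem_span : FreeLieAlgebra.of K (1 : Fin 2) ∈ Submodule.span K (genSet K) :=
  Submodule.subset_span (Set.mem_insert_of_mem _ rfl)

/-- The endomorphism sending `x ↦ u`, `y ↦ v`. -/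
def E (u v : LieW K) : LieEnd K :=
  FreeLieAlgebra.lift K (fun i => if i = 0 then u else v)

@[simp] lemma E_apply0 (u v : LieW K) : E u v (FreeLieAlgebra.of K 0) = u := by
  simp [E, lift_of_apply]

@[simp] lemma E_apply1 (u v : LieW K) : E u v (FreeLieAlgebra.of K 1) = v := by
  simp [E, lift_of_apply]

lemma endo_ext {σ η : LieEnd K} (h0 : σ (FreeLieAlgebra.of K 0) = η (FreeLieAlgebra.of K 0))
    (h1 : σ (FreeLieAlgebra.of K 1) = η (FreeLieAlgebra.of K 1)) : σ = η := by
  apply FreeLieAlgebra.hom_ext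
  intro i
  fin_cases i
  · exact h0
  · exact h1

lemma mul_E (σ : LieEnd K) (u v : LieW K) : σ * E u v = E (σ u) (σ v) := by
  apply endo_ext <;> simp

lemma E_isLEndo {u v : LieW K} (hu : u ∈ Submodule.span K (genSet K))
    (hv : v ∈ Submodule.span K (genSet K)) : IsLEndo (E u v) := by
  intro i
  fin_cases i
  · simpa [genSet] using hu
  · simpa [genSet] using hv

@[simp] lemma lieTau_of (l : K) (i : Fin 2) :
    lieTau K l (FreeLieAlgebra.of K i) = l • FreeLieAlgebra.of K i :=
  FreeLieAlgebra.lift_of_apply _ _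

lemma lieTau_mul (a b : K) : lieTau K a * lieTau K b = lieTau K (a * b) := by
  apply endo_ext <;> simp [mul_comm, smul_smul]

lemma lieTau_one : lieTau K 1 = 1 := by
  apply endo_ext <;> simp

end Stmt13
namespace Stmt13

variable {K : Type*} [Field K]

/-- Bihomogeneous Lie monomials in the generators, with their bidegree. -/
inductive IsMono (K : Type*) [Field K] : ℕ → ℕ → LieW K → Prop
  | x : IsMono K 1 0 (FreeLieAlgebra.of K 0)
  | y : IsMono K 0 1 (FreeLieAlgebra.of K 1)
  | brk {a b c d : ℕ} {u v : LieW K} : IsMono K a b u → IsMono K c d v →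
      IsMono K (a + c) (b + d) ⁅u, v⁆

lemma IsMono.pos {a b : ℕ} {m : LieW K} (h : IsMono K a b m) : 0 < a + b := by
  induction h with
  | x => omega
  | y => omega
  | brk _ _ ih1 ih2 => omega

lemma isMono_one_one {m : LieW K} (h : IsMono K 1 1 m) :
    m ∈ Submodule.span K ({⁅(FreeLieAlgebra.of K 0 : LieW K), FreeLieAlgebra.of K 1⁆} : Set (LieW K)) := by
  have key : ∀ (a b : ℕ) (m : LieW K), IsMono K a b m →
      (a = 1 ∧ b = 0 → m = FreeLieAlgebra.of K 0) ∧
      (a = 0 ∧ b = 1 → m = FreeLieAlgebra.of K 1) ∧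
      (a = 1 ∧ b = 1 →
        m ∈ Submodule.span K
          ({⁅(FreeLieAlgebra.of K 0 : LieW K), FreeLieAlgebra.of K 1⁆} : Set (LieW K))) := by
    intro a b m h
    induction h with
    | x => refine ⟨fun _ => rfl, fun h => by omega, fun h => by omega⟩
    | y => refine ⟨fun h => by omega, fun _ => rfl, fun h => by omega⟩
    | @brk a b c d u v h1 h2 ih1 ih2 =>
      have p1 := h1.pos
      have p2 := h2.pos
      refine ⟨fun h => by omega, fun h => by omega, fun h => ?_⟩
      -- a + c = 1, b + d = 1, a + b > 0, c + d > 0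
      have hcases : (a = 1 ∧ b = 0 ∧ c = 0 ∧ d = 1) ∨ (a = 0 ∧ b = 1 ∧ c = 1 ∧ d = 0) := by
        omega
      rcases hcases with ⟨ha, hb, hc, hd⟩ | ⟨ha, hb, hc, hd⟩
      · have hu := ih1.1 ⟨ha, hb⟩
        have hv := ih2.2.1 ⟨hc, hd⟩
        subst hu hv
        exact Submodule.mem_span_singleton_self _
      · have hu := ih1.2.1 ⟨ha, hb⟩
        have hv := ih2.1 ⟨hc, hd⟩
        subst hu hv
        rw [show (⁅(FreeLieAlgebra.of K 1 : LieW K), FreeLieAlgebra.of K 0⁆ : LieW K) =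
          -⁅(FreeLieAlgebra.of K 0 : LieW K), FreeLieAlgebra.of K 1⁆ from (lie_skew _ _).symm]
        exact Submodule.neg_mem _ (Submodule.mem_span_singleton_self _)
  exact (key 1 1 m h).2.2 ⟨rfl, rfl⟩

/-- The span of all bihomogeneous monomials is everything. -/
lemma span_isMono_top :
    Submodule.span K {m : LieW K | ∃ a b, IsMono K a b m} = ⊤ := by
  set S := Submodule.span K {m : LieW K | ∃ a b, IsMono K a b m} with hS
  have hbrk : ∀ u ∈ S, ∀ v ∈ S, ⁅u, v⁆ ∈ S := by
    intro u hu v hv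
    induction hu using Submodule.span_induction with
    | mem u hu =>
      induction hv using Submodule.span_induction with
      | mem v hv =>
        obtain ⟨a, b, hu⟩ := hu
        obtain ⟨c, d, hv⟩ := hv
        exact Submodule.subset_span ⟨a + c, b + d, hu.brk hv⟩
      | zero => simp
      | add v w hv hw ihv ihw => rw [lie_add]; exact S.add_mem ihv ihw
      | smul c v hv ihv => rw [lie_smul]; exact S.smul_mem c ihv
    | zero => simp
    | add u w hu hw ihu ihw => rw [add_lie]; exact S.add_mem ihu ihw
    | smul c u hu ihu => rw [smul_lie]; exact S.smul_mem c ihu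
  let S' : LieSubalgebra K (LieW K) :=
    { S with lie_mem' := fun {u v} hu hv => hbrk u hu v hv }
  have hof : ∀ i : Fin 2, FreeLieAlgebra.of K i ∈ S' := by
    intro i
    fin_cases i
    · exact Submodule.subset_span ⟨1, 0, IsMono.x⟩
    · exact Submodule.subset_span ⟨0, 1, IsMono.y⟩
  have key : ∀ z : LieW K, z ∈ S' := by
    let f : LieW K →ₗ⁅K⁆ S' :=
      FreeLieAlgebra.lift K (fun i => ⟨FreeLieAlgebra.of K i, hof i⟩)
    have hcomp : S'.incl.comp f = LieHom.id := by
      apply FreeLieAlgebra.hom_ext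
      intro i
      show S'.incl (f (FreeLieAlgebra.of K i)) = FreeLieAlgebra.of K i
      rw [show f (FreeLieAlgebra.of K i) = ⟨FreeLieAlgebra.of K i, hof i⟩ from
        FreeLieAlgebra.lift_of_apply _ _]
      rfl
    intro z
    have : S'.incl (f z) = z := by
      have := congrArg (fun g : LieW K →ₗ⁅K⁆ LieW K => g z) hcomp
      simpa using this
    rw [← this]
    exact (f z).2
  exact Submodule.eq_top_iff'.mpr key

end Stmt13
namespace Stmt13

variable {K : Type*} [Field K]

lemma lie_smul' (c : K) (p q : LieW K) : ⁅p, c • q⁆ = c • ⁅p, q⁆ := by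
  rw [← lie_skew p (c • q), smul_lie, ← lie_skew p q, smul_neg]

/-- `x ↦ x`, `y ↦ μ y`. -/
def Dy (μ : K) : LieEnd K := E (FreeLieAlgebra.of K 0) (μ • FreeLieAlgebra.of K 1)

/-- `x ↦ μ x`, `y ↦ y`. -/
def Dx (μ : K) : LieEnd K := E (μ • FreeLieAlgebra.of K 0) (FreeLieAlgebra.of K 1)

lemma Dy_isLEndo (μ : K) : IsLEndo (Dy μ) :=
  E_isLEndo of0_mem_span (Submodule.smul_mem _ _ of1_mem_span)

lemma Dx_isLEndo (μ : K) : IsLEndo (Dx μ) :=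
  E_isLEndo (Submodule.smul_mem _ _ of0_mem_span) of1_mem_span

lemma Dy_mono {a b : ℕ} {m : LieW K} (h : IsMono K a b m) (μ : K) :
    Dy μ m = μ ^ b • m := by
  induction h with
  | x => simp [Dy]
  | y => simp [Dy]
  | @brk a b c d u v h1 h2 ih1 ih2 =>
    rw [LieHom.map_lie, ih1, ih2, lie_smul', smul_lie, smul_smul, ← pow_add, add_comm d b]

lemma Dx_mono {a b : ℕ} {m : LieW K} (h : IsMono K a b m) (μ : K) :
    Dx μ m = μ ^ a • m := by
  induction h with
  | x => simp [Dx]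
  | y => simp [Dx]
  | @brk a b c d u v h1 h2 ih1 ih2 =>
    rw [LieHom.map_lie, ih1, ih2, lie_smul', smul_lie, smul_smul, ← pow_add, add_comm c a]

/-- Vector-valued Vandermonde: a finitely supported family whose "polynomial" evaluates to zero
everywhere over an infinite field is zero. -/
lemma finsupp_eq_zero_of_eval [Infinite K] (f : ℕ →₀ LieW K)
    (h : ∀ μ : K, (f.sum fun b v => μ ^ b • v) = 0) : f = 0 := by
  ext b₀
  rw [Finsupp.coe_zero, Pi.zero_apply, ← Module.forall_dual_apply_eq_zero_iff K]
  intro φ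
  classical
  set p : Polynomial K := f.sum (fun b v => Polynomial.C (φ v) * Polynomial.X ^ b) with hp
  have hev : ∀ μ : K, p.eval μ = 0 := by
    intro μ
    have : p.eval μ = f.sum fun b v => φ v * μ ^ b := by
      rw [hp, Finsupp.sum, Finsupp.sum, Polynomial.eval_finset_sum]
      simp
    rw [this]
    have := congrArg φ (h μ)
    rw [map_finsuppSum] at this
    simpa [map_smul, smul_eq_mul, mul_comm] using this
  have hp0 : p = 0 := Polynomial.zero_of_eval_zero p hev
  have : p.coeff b₀ = φ (f b₀) := by
    rw [hp, Finsupp.sum, Polynomial.finset_sum_coeff]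
    simp only [Polynomial.coeff_C_mul, Polynomial.coeff_X_pow, mul_ite, mul_one, mul_zero]
    rw [Finset.sum_ite_eq f.support b₀ (fun b => φ (f b))]
    by_cases hb : b₀ ∈ f.support
    · simp [hb]
    · simp [hb, Finsupp.notMem_support_iff.mp hb]
  rw [hp0] at this
  simpa using this.symm

end Stmt13
namespace Stmt13

variable {K : Type*} [Field K]

lemma eigen_aux [Infinite K] (D : K → LieEnd K) (U : ℕ → Submodule K (LieW K))
    (hU : ∀ (μ : K) (b : ℕ), ∀ v ∈ U b, D μ v = μ ^ b • v)
    (z : LieW K) (hz : z ∈ ⨆ b, U b) (hev : ∀ μ : K, D μ z = μ • z) : z ∈ U 1 := by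
  classical
  obtain ⟨f, hf, hsum⟩ := (Submodule.mem_iSup_iff_exists_finsupp U z).mp hz
  have key : ∀ μ : K, (f.sum fun b v => μ ^ b • v) = μ • z := by
    intro μ
    have h1 : D μ z = f.sum fun b v => D μ v := by
      rw [← hsum]
      exact map_finsuppSum (D μ).toLinearMap f _
    have h2 : (f.sum fun b v => D μ v) = f.sum fun b v => μ ^ b • v := by
      apply Finsupp.sum_congr
      intro b _
      exact hU μ b (f b) (hf b)
    rw [← h2, ← h1, hev]
  set F : ℕ →₀ LieW K := f - Finsupp.single 1 z with hF
  have hF0 : F = 0 := by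
    apply finsupp_eq_zero_of_eval
    intro μ
    rw [hF, Finsupp.sum_sub_index (fun a b₁ b₂ => smul_sub _ _ _),
      Finsupp.sum_single_index (h := fun b v => μ ^ b • v) (smul_zero _), pow_one, key, sub_self]
  rw [hF] at hF0
  have : f = Finsupp.single 1 z := by rwa [sub_eq_zero] at hF0
  have hz1 : f 1 = z := by rw [this, Finsupp.single_eq_same]
  rw [← hz1]
  exact hf 1

lemma eigen_mem [Infinite K] (z : LieW K)
    (hy : ∀ μ : K, Dy μ z = μ • z) (hx : ∀ μ : K, Dx μ z = μ • z) :
    z ∈ Submodule.span K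
      ({⁅(FreeLieAlgebra.of K 0 : LieW K), FreeLieAlgebra.of K 1⁆} : Set (LieW K)) := by
  -- first, isolate the y-degree-1 part
  set U : ℕ → Submodule K (LieW K) := fun b => Submodule.span K {m | ∃ a, IsMono K a b m}
    with hUdef
  have hU : ∀ (μ : K) (b : ℕ), ∀ v ∈ U b, Dy μ v = μ ^ b • v := by
    intro μ b v hv
    induction hv using Submodule.span_induction with
    | mem m hm => obtain ⟨a, hm⟩ := hm; exact Dy_mono hm μ
    | zero => rw [map_zero, smul_zero]
    | add u w hu hw ihu ihw => rw [map_add, ihu, ihw, smul_add]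
    | smul c u hu ihu => rw [map_smul, ihu, smul_comm]
  have hz : z ∈ ⨆ b, U b := by
    have htop : (⊤ : Submodule K (LieW K)) ≤ ⨆ b, U b := by
      rw [← span_isMono_top]
      apply Submodule.span_le.mpr
      rintro m ⟨a, b, hm⟩
      exact Submodule.mem_iSup_of_mem b (Submodule.subset_span ⟨a, hm⟩)
    exact htop Submodule.mem_top
  have hz1 : z ∈ U 1 := eigen_aux Dy U hU z hz hy
  -- then, isolate the x-degree-1 part
  set U' : ℕ → Submodule K (LieW K) := fun a => Submodule.span K {m | IsMono K a 1 m}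
    with hU'def
  have hU' : ∀ (μ : K) (a : ℕ), ∀ v ∈ U' a, Dx μ v = μ ^ a • v := by
    intro μ a v hv
    induction hv using Submodule.span_induction with
    | mem m hm => exact Dx_mono hm μ
    | zero => rw [map_zero, smul_zero]
    | add u w hu hw ihu ihw => rw [map_add, ihu, ihw, smul_add]
    | smul c u hu ihu => rw [map_smul, ihu, smul_comm]
  have hz' : z ∈ ⨆ a, U' a := by
    have : U 1 ≤ ⨆ a, U' a := by
      apply Submodule.span_le.mpr
      rintro m ⟨a, hm⟩
      exact Submodule.mem_iSup_of_mem a (Submodule.subset_span hm)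
    exact this hz1
  have hz2 : z ∈ U' 1 := eigen_aux Dx U' hU' z hz' hx
  revert hz2
  apply Submodule.span_le.mpr
  intro m hm
  exact isMono_one_one hm

end Stmt13
namespace Stmt13

variable {K : Type*} [Field K]

attribute [local instance 100] LieRing.ofAssociativeRing

lemma bracket_ne_zero :
    (⁅(FreeLieAlgebra.of K 0 : LieW K), FreeLieAlgebra.of K 1⁆ : LieW K) ≠ 0 := by
  classical
  intro hzero
  let A : Matrix (Fin 2) (Fin 2) K := Matrix.single 0 1 1
  let B : Matrix (Fin 2) (Fin 2) K := Matrix.single 1 0 1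
  let φ : LieW K →ₗ⁅K⁆ Matrix (Fin 2) (Fin 2) K :=
    FreeLieAlgebra.lift K (fun i => if i = 0 then A else B)
  have h1 : φ ⁅(FreeLieAlgebra.of K 0 : LieW K), FreeLieAlgebra.of K 1⁆ = ⁅A, B⁆ := by
    rw [LieHom.map_lie]
    congr 1 <;> simp [φ, FreeLieAlgebra.lift_of_apply]
  rw [hzero, map_zero] at h1
  have h2 : (⁅A, B⁆ : Matrix (Fin 2) (Fin 2) K) 0 0 = 1 := by
    rw [LieRing.of_associative_ring_bracket]
    simp [A, B, Matrix.single_mul_single_same, Matrix.mul_apply, Matrix.single,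
      Fin.sum_univ_two]
  rw [← h1] at h2
  simp at h2

/-- The key map `t : W → W` induced by `T` via the endomorphisms `E w 0`. -/
def tmap (T : MulAut (LieEnd K)) (w : LieW K) : LieW K :=
  (T (E w 0)) (FreeLieAlgebra.of K 0)

variable (T : MulAut (LieEnd K))

lemma T_E (hid : ∀ σ : LieEnd K, IsLEndo σ → T σ = σ) (w : LieW K) : T (E w 0) = E (tmap T w) 0 := by
  have hex : T (E (FreeLieAlgebra.of K 0) 0) = E (FreeLieAlgebra.of K 0) 0 :=
    hid _ (E_isLEndo of0_mem_span (Submodule.zero_mem _))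
  have h1 : E w 0 * E (FreeLieAlgebra.of K 0) 0 = E w 0 := by
    rw [mul_E]; simp
  have h2 : T (E w 0) = T (E w 0) * E (FreeLieAlgebra.of K 0) 0 := by
    rw [← hex, ← map_mul, h1]
  rw [h2, mul_E]
  simp [tmap]

lemma tmap_rel (hid : ∀ σ : LieEnd K, IsLEndo σ → T σ = σ) (σ : LieEnd K) (w : LieW K) :
    (T σ) (tmap T w) = tmap T (σ w) := by
  have h1 : σ * E w 0 = E (σ w) 0 := by rw [mul_E]; simp
  have h2 : T σ * T (E w 0) = T (E (σ w) 0) := by rw [← map_mul, h1]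
  rw [T_E T hid, T_E T hid, mul_E] at h2
  have := congrArg (fun g : LieEnd K => g (FreeLieAlgebra.of K 0)) h2
  simpa using this

lemma tmap_fix (hid : ∀ σ : LieEnd K, IsLEndo σ → T σ = σ) {w : LieW K} (hw : w ∈ Submodule.span K (genSet K)) : tmap T w = w := by
  have : T (E w 0) = E w 0 := hid _ (E_isLEndo hw (Submodule.zero_mem _))
  rw [tmap, this]
  simp

lemma tmap_add (hid : ∀ σ : LieEnd K, IsLEndo σ → T σ = σ) (u v : LieW K) : tmap T (u + v) = tmap T u + tmap T v := by
  have hxy : tmap T (FreeLieAlgebra.of K 0 + FreeLieAlgebra.of K 1)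
      = FreeLieAlgebra.of K 0 + FreeLieAlgebra.of K 1 :=
    tmap_fix T hid (Submodule.add_mem _ of0_mem_span of1_mem_span)
  have h0 : tmap T (FreeLieAlgebra.of K 0) = FreeLieAlgebra.of K 0 := tmap_fix T hid of0_mem_span
  have h1 : tmap T (FreeLieAlgebra.of K 1) = FreeLieAlgebra.of K 1 := tmap_fix T hid of1_mem_span
  have key := tmap_rel T hid (E u v) (FreeLieAlgebra.of K 0 + FreeLieAlgebra.of K 1)
  rw [hxy] at key
  have e1 : E u v (FreeLieAlgebra.of K 0 + FreeLieAlgebra.of K 1) = u + v := by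
    rw [map_add]; simp
  rw [e1] at key
  rw [← key, map_add]
  have k0 := tmap_rel T hid (E u v) (FreeLieAlgebra.of K 0)
  rw [h0] at k0
  have k1 := tmap_rel T hid (E u v) (FreeLieAlgebra.of K 1)
  rw [h1] at k1
  rw [k0, k1]
  simp

lemma tmap_smul (hid : ∀ σ : LieEnd K, IsLEndo σ → T σ = σ) (c : K) (u : LieW K) : tmap T (c • u) = c • tmap T u := by
  have hcx : tmap T (c • FreeLieAlgebra.of K 0) = c • FreeLieAlgebra.of K 0 :=
    tmap_fix T hid (Submodule.smul_mem _ _ of0_mem_span)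
  have h0 : tmap T (FreeLieAlgebra.of K 0) = FreeLieAlgebra.of K 0 := tmap_fix T hid of0_mem_span
  have key := tmap_rel T hid (E u 0) (c • FreeLieAlgebra.of K 0)
  rw [hcx] at key
  have e1 : E u 0 (c • FreeLieAlgebra.of K 0) = c • u := by rw [map_smul]; simp
  rw [e1] at key
  rw [← key, map_smul]
  have k0 := tmap_rel T hid (E u 0) (FreeLieAlgebra.of K 0)
  rw [h0] at k0
  rw [k0]
  simp

/-- `tmap` as a linear map. -/
def tmapL (hid : ∀ σ : LieEnd K, IsLEndo σ → T σ = σ) : LieW K →ₗ[K] LieW K where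
  toFun := tmap T
  map_add' := tmap_add T hid
  map_smul' := tmap_smul T hid

end Stmt13

open Stmt13

/-- Over an infinite field, if a characteristic automorphism `T` of the
endomorphism monoid of the free Lie algebra on two generators acts identically on the subsemigroup
of `L`-endomorphisms, then there is `λ ≠ 0` in `K` with `T σ = τ_λ⁻¹ ∘ σ ∘ τ_λ` for every
endomorphism `σ`. -/
theorem characteristic_aut_fixing_LEndos_is_conjugation (K : Type*) [Field K] [Infinite K]
    (T : MulAut (LieEnd K)) (hT : IsCharacteristic T)
    (hid : ∀ σ : LieEnd K, IsLEndo σ → T σ = σ) :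
    ∃ l : K, l ≠ 0 ∧ ∀ σ : LieEnd K,
      T σ = (lieTau K l⁻¹).comp (σ.comp (lieTau K l)) := by
  classical
  set x0 : LieW K := FreeLieAlgebra.of K 0 with hx0
  set y0 : LieW K := FreeLieAlgebra.of K 1 with hy0
  set z : LieW K := tmap T ⁅x0, y0⁆ with hz
  have hy : ∀ μ : K, Dy μ z = μ • z := by
    intro μ
    have hDy := hid _ (Dy_isLEndo (K := K) μ)
    have key := tmap_rel T hid (Dy μ) ⁅x0, y0⁆
    rw [hDy] at key
    have hbr : Dy μ ⁅x0, y0⁆ = μ • ⁅x0, y0⁆ := by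
      rw [LieHom.map_lie]
      simp only [hx0, hy0, Dy, E_apply0, E_apply1]
      rw [lie_smul']
    rw [hbr, tmap_smul T hid] at key
    rw [hz]
    exact key
  have hx : ∀ μ : K, Dx μ z = μ • z := by
    intro μ
    have hDx := hid _ (Dx_isLEndo (K := K) μ)
    have key := tmap_rel T hid (Dx μ) ⁅x0, y0⁆
    rw [hDx] at key
    have hbr : Dx μ ⁅x0, y0⁆ = μ • ⁅x0, y0⁆ := by
      rw [LieHom.map_lie]
      simp only [hx0, hy0, Dx, E_apply0, E_apply1]
      rw [smul_lie]
    rw [hbr, tmap_smul T hid] at key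
    rw [hz]
    exact key
  have hzmem : z ∈ Submodule.span K ({⁅x0, y0⁆} : Set (LieW K)) := eigen_mem z hy hx
  obtain ⟨lam, hlam⟩ := Submodule.mem_span_singleton.mp hzmem
  -- `T.symm` also fixes L-endomorphisms
  have hid' : ∀ σ : LieEnd K, IsLEndo σ → T.symm σ = σ := by
    intro σ h
    have h2 : T.symm (T σ) = σ := T.symm_apply_apply σ
    rwa [hid σ h] at h2
  have hinj : ∀ w : LieW K, tmap T.symm (tmap T w) = w := by
    intro w
    have h1 : T (E w 0) = E (tmap T w) 0 := T_E T hid w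
    have h2 : T.symm (E (tmap T w) 0) = E (tmap T.symm (tmap T w)) 0 := T_E T.symm hid' _
    rw [← h1, T.symm_apply_apply] at h2
    have h3 := congrArg (fun g : LieEnd K => g x0) h2
    simpa [hx0] using h3.symm
  have hlam0 : lam ≠ 0 := by
    rintro rfl
    rw [zero_smul] at hlam
    have h1 : tmap T.symm z = ⁅x0, y0⁆ := hinj _
    rw [← hlam] at h1
    have h2 : tmap T.symm (0 : LieW K) = 0 :=
      tmap_fix T.symm hid' (Submodule.zero_mem _)
    rw [h2] at h1
    exact bracket_ne_zero h1.symm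
  -- the twisted bracket formula
  have hbrk : ∀ u v : LieW K, tmap T ⁅u, v⁆ = lam • ⁅tmap T u, tmap T v⁆ := by
    intro u v
    have key := tmap_rel T hid (E u v) ⁅x0, y0⁆
    have e1 : E u v ⁅x0, y0⁆ = ⁅u, v⁆ := by rw [LieHom.map_lie]; simp [hx0, hy0]
    rw [e1, ← hz, ← hlam, map_smul, LieHom.map_lie] at key
    have a0 : (T (E u v)) x0 = tmap T u := by
      have h := tmap_rel T hid (E u v) x0
      rw [tmap_fix T hid of0_mem_span] at h
      rw [h, hx0]
      simp
    have a1 : (T (E u v)) y0 = tmap T v := by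
      have h := tmap_rel T hid (E u v) y0
      rw [tmap_fix T hid of1_mem_span] at h
      rw [h, hy0]
      simp
    rw [a0, a1] at key
    exact key.symm
  have tau_inv : ∀ w : LieW K, lieTau K lam (lieTau K lam⁻¹ w) = w := by
    intro w
    have h : lieTau K lam * lieTau K lam⁻¹ = 1 := by
      rw [lieTau_mul, mul_inv_cancel₀ hlam0, lieTau_one]
    have := congrArg (fun g : LieEnd K => g w) h
    simpa using this
  -- the normalized map is a Lie endomorphism fixing the generators, hence the identity
  let g : LieW K →ₗ[K] LieW K :=
    lam • ((lieTau K lam⁻¹).toLinearMap ∘ₗ tmapL T hid)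
  have gapp : ∀ w : LieW K, g w = lam • lieTau K lam⁻¹ (tmap T w) := fun w => rfl
  have glie : ∀ u v : LieW K, g ⁅u, v⁆ = ⁅g u, g v⁆ := by
    intro u v
    rw [gapp, gapp, gapp, hbrk, map_smul, LieHom.map_lie, smul_lie, lie_smul',
      smul_smul]
  let gH : LieEnd K := { g with map_lie' := fun {u v} => glie u v }
  have gH_id : gH = (1 : LieEnd K) := by
    apply endo_ext
    · show g (FreeLieAlgebra.of K 0) = _
      rw [gapp, tmap_fix T hid of0_mem_span]
      simp [smul_smul, mul_inv_cancel₀ hlam0]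
    · show g (FreeLieAlgebra.of K 1) = _
      rw [gapp, tmap_fix T hid of1_mem_span]
      simp [smul_smul, mul_inv_cancel₀ hlam0]
  have hinv : ∀ w : LieW K, lam • lieTau K lam⁻¹ (tmap T w) = w := by
    intro w
    have := congrArg (fun g' : LieEnd K => g' w) gH_id
    have h' : gH w = w := by simpa using this
    exact h'
  have ht : ∀ w : LieW K, tmap T w = lam⁻¹ • lieTau K lam w := by
    intro w
    have h := congrArg (lieTau K lam) (hinv w)
    rw [map_smul, tau_inv] at h
    rw [← h, smul_smul, inv_mul_cancel₀ hlam0, one_smul]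
  refine ⟨lam⁻¹, inv_ne_zero hlam0, ?_⟩
  intro σ
  apply endo_ext
  · have h := tmap_rel T hid σ (FreeLieAlgebra.of K 0)
    rw [tmap_fix T hid of0_mem_span] at h
    rw [h, ht]
    show _ = lieTau K lam⁻¹⁻¹ (σ (lieTau K lam⁻¹ (FreeLieAlgebra.of K 0)))
    rw [inv_inv, lieTau_of, map_smul, map_smul]
  · have h := tmap_rel T hid σ (FreeLieAlgebra.of K 1)
    rw [tmap_fix T hid of1_mem_span] at h
    rw [h, ht]
    show _ = lieTau K lam⁻¹⁻¹ (σ (lieTau K lam⁻¹ (FreeLieAlgebra.of K 1)))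
    rw [inv_inv, lieTau_of, map_smul, map_smul]
end
end

section
/- Let K be an infinite field, W the free Lie algebra over K on two generators x and y, and T a characteristic automorphism of End(W) which acts identically on the subsemigroup of L-endomorphisms. For p ∈ W let d(p) ∈ End(W) denote the endomorphism determined by d(p)(x) = p and d(p)(y) = y. Then there exists λ ∈ K, λ ≠ 0, such that T(d(p)) = τ_λ^{-1} ∘ d(p) ∘ τ_λ for every p ∈ W. -/
noncomputable section

open FreeLieAlgebra

section Aux

variable {K : Type*} [Field K]

/-- The endomorphism sending `x ↦ u`, `y ↦ v`. -/
def EE (u v : LieW K) : LieEnd K :=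
  FreeLieAlgebra.lift K (fun i : Fin 2 => if i = 0 then u else v)

@[simp] lemma EE_apply_x (u v : LieW K) : EE u v (of K 0) = u := by
  rw [EE, lift_of_apply]; simp

@[simp] lemma EE_apply_y (u v : LieW K) : EE u v (of K 1) = v := by
  rw [EE, lift_of_apply]; simp

lemma endo_ext {f g : LieEnd K} (h0 : f (of K 0) = g (of K 0))
    (h1 : f (of K 1) = g (of K 1)) : f = g :=
  FreeLieAlgebra.hom_ext (Fin.forall_fin_two.mpr ⟨h0, h1⟩)

lemma lieW_lie_smul (t : K) (a b : LieW K) : ⁅a, t • b⁆ = t • ⁅a, b⁆ := by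
  rw [← lie_skew, smul_lie, ← smul_neg, lie_skew]

lemma lieW_smul_lie_smul (s t : K) (a b : LieW K) :
    ⁅s • a, t • b⁆ = (s * t) • ⁅a, b⁆ := by
  rw [smul_lie, lieW_lie_smul, smul_smul]

lemma lieEnd_mul_apply (f g : LieEnd K) (w : LieW K) : (f * g) w = f (g w) := rfl

lemma EE_lie (u v : LieW K) : EE u v ⁅of K (0 : Fin 2), of K 1⁆ = ⁅u, v⁆ := by
  rw [LieHom.map_lie, EE_apply_x, EE_apply_y]

/-- membership in the linear span of the generators -/
abbrev VS (K : Type*) [Field K] : Submodule K (LieW K) :=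
  Submodule.span K ({FreeLieAlgebra.of K 0, FreeLieAlgebra.of K 1} : Set (LieW K))

lemma x_mem_VS : of K 0 ∈ VS K := Submodule.subset_span (Set.mem_insert _ _)

lemma y_mem_VS : of K 1 ∈ VS K :=
  Submodule.subset_span (Set.mem_insert_of_mem _ rfl)

lemma isLEndo_EE {u v : LieW K} (hu : u ∈ VS K) (hv : v ∈ VS K) : IsLEndo (EE u v) := by
  intro i
  fin_cases i
  · simpa using hu
  · simpa using hv

lemma lieTau_of (l : K) (i : Fin 2) : lieTau K l (of K i) = l • of K i := by
  rw [lieTau, lift_of_apply]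

lemma lieTau_tau (a b : K) (w : LieW K) : lieTau K a (lieTau K b w) = lieTau K (a * b) w := by
  have : (lieTau K a).comp (lieTau K b) = lieTau K (a * b) := by
    apply endo_ext <;> simp [LieHom.comp_apply, lieTau_of, smul_smul, mul_comm]
  exact congrArg (fun F : LieEnd K => F w) this

lemma lieTau_one (w : LieW K) : lieTau K 1 w = w := by
  have : lieTau K (1 : K) = (LieHom.id : LieEnd K) := by
    apply endo_ext <;> simp [lieTau_of]
  rw [this]; rfl

end Aux
section Mono

variable {K : Type*} [Field K]

/-- Lie monomials in the generators, with their bidegree. -/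
inductive Mono (K : Type*) [Field K] : LieW K → ℕ → ℕ → Prop
  | gen_x : Mono K (of K 0) 1 0
  | gen_y : Mono K (of K 1) 0 1
  | lie {a b : LieW K} {i j k l : ℕ} :
      Mono K a i j → Mono K b k l → Mono K ⁅a, b⁆ (i + k) (j + l)

lemma mono_pos {m : LieW K} {i j : ℕ} (h : Mono K m i j) : 1 ≤ i + j := by
  induction h <;> omega

lemma mono_10 {m : LieW K} {i j : ℕ} (h : Mono K m i j) (hi : i = 1) (hj : j = 0) :
    m = of K 0 := by
  induction h with
  | gen_x => rfl
  | gen_y => simp at hj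
  | lie ha hb iha ihb =>
    have := mono_pos ha; have := mono_pos hb; omega

lemma mono_01 {m : LieW K} {i j : ℕ} (h : Mono K m i j) (hi : i = 0) (hj : j = 1) :
    m = of K 1 := by
  induction h with
  | gen_x => simp at hi
  | gen_y => rfl
  | lie ha hb iha ihb =>
    have := mono_pos ha; have := mono_pos hb; omega

lemma mono_11 {m : LieW K} {i j : ℕ} (h : Mono K m i j) (hi : i = 1) (hj : j = 1) :
    m = ⁅of K (0 : Fin 2), of K 1⁆ ∨ m = ⁅of K (1 : Fin 2), of K 0⁆ := by
  induction h with
  | gen_x => simp at hj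
  | gen_y => simp at hi
  | lie ha hb iha ihb =>
    rename_i a b i j k l
    have pa := mono_pos ha; have pb := mono_pos hb
    have hcase : (i = 1 ∧ j = 0 ∧ k = 0 ∧ l = 1) ∨ (i = 0 ∧ j = 1 ∧ k = 1 ∧ l = 0) := by omega
    rcases hcase with ⟨h1, h2, h3, h4⟩ | ⟨h1, h2, h3, h4⟩
    · rw [mono_10 ha h1 h2, mono_01 hb h3 h4]; exact Or.inl rfl
    · rw [mono_01 ha h1 h2, mono_10 hb h3 h4]; exact Or.inr rfl

lemma mono_eval_x (c : K) {m : LieW K} {i j : ℕ} (h : Mono K m i j) :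
    EE (c • of K 0) (of K 1) m = c ^ i • m := by
  induction h with
  | gen_x => rw [EE_apply_x, pow_one]
  | gen_y => rw [EE_apply_y, pow_zero, one_smul]
  | lie ha hb iha ihb =>
    rw [LieHom.map_lie, iha, ihb, lieW_smul_lie_smul, ← pow_add]

lemma mono_eval_y (c : K) {m : LieW K} {i j : ℕ} (h : Mono K m i j) :
    EE (of K 0) (c • of K 1) m = c ^ j • m := by
  induction h with
  | gen_x => rw [EE_apply_x, pow_zero, one_smul]
  | gen_y => rw [EE_apply_y, pow_one]
  | lie ha hb iha ihb =>
    rw [LieHom.map_lie, iha, ihb, lieW_smul_lie_smul, ← pow_add]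

lemma span_mono_top :
    Submodule.span K {w : LieW K | ∃ i j, Mono K w i j} = ⊤ := by
  set S : Set (LieW K) := {w : LieW K | ∃ i j, Mono K w i j} with hS
  set P : Submodule K (LieW K) := Submodule.span K S with hP
  have hbr : ∀ a ∈ P, ∀ b ∈ P, ⁅a, b⁆ ∈ P := by
    intro a ha
    induction ha using Submodule.span_induction with
    | mem a haS =>
      intro b hb
      induction hb using Submodule.span_induction with
      | mem b hbS =>
        obtain ⟨i, j, hija⟩ := haS
        obtain ⟨k, l, hklb⟩ := hbS
        exact Submodule.subset_span ⟨_, _, Mono.lie hija hklb⟩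
      | zero => rw [lie_zero]; exact P.zero_mem
      | add u v hu hv ihu ihv => rw [lie_add]; exact P.add_mem ihu ihv
      | smul c u hu ihu => rw [lieW_lie_smul]; exact P.smul_mem c ihu
    | zero => intro b hb; rw [zero_lie]; exact P.zero_mem
    | add u v hu hv ihu ihv => intro b hb; rw [add_lie]; exact P.add_mem (ihu b hb) (ihv b hb)
    | smul c u hu ihu => intro b hb; rw [smul_lie]; exact P.smul_mem c (ihu b hb)
  let Q : LieSubalgebra K (LieW K) :=
    { P with lie_mem' := fun {a b} ha hb => hbr a ha b hb }
  have hgen : ∀ i : Fin 2, of K i ∈ Q := by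
    intro i; fin_cases i
    · exact Submodule.subset_span ⟨1, 0, Mono.gen_x⟩
    · exact Submodule.subset_span ⟨0, 1, Mono.gen_y⟩
  let f : LieW K →ₗ⁅K⁆ Q := FreeLieAlgebra.lift K (fun i => ⟨of K i, hgen i⟩)
  have hcomp : (Q.incl).comp f = (LieHom.id : LieEnd K) := by
    apply FreeLieAlgebra.hom_ext
    intro i
    simp [f, LieHom.comp_apply, lift_of_apply]
  rw [eq_top_iff]
  intro w _
  have : Q.incl (f w) = w := by
    have := congrArg (fun F : LieEnd K => F w) hcomp
    simpa using this
  rw [← this]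
  exact (f w).2

end Mono

section Extract

variable {K : Type*} [Field K]

open Polynomial in
/-- Vandermonde-type extraction: if `Λ_c q = c • q` for all `c` and `q` is a combination of
`Λ`-eigenvectors with eigenvalues `c ^ dd i`, then only the degree-one part survives. -/
lemma extract_deg [Infinite K] {n : ℕ} (Λ : K → LieEnd K) (q : LieW K)
    (f : Fin n → K) (m : Fin n → LieW K) (dd : Fin n → ℕ)
    (hq : ∑ i, f i • m i = q)
    (hm : ∀ (c : K) (i : Fin n), Λ c (m i) = c ^ dd i • m i)
    (hrel : ∀ c : K, Λ c q = c • q) :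
    ∑ i, (if dd i = 1 then f i else 0) • m i = q := by
  rw [← sub_eq_zero]
  rw [← Module.forall_dual_apply_eq_zero_iff K]
  intro ℓ
  have hPeq : (∑ i, monomial (dd i) (f i * ℓ (m i))) = monomial 1 (ℓ q) := by
    apply Polynomial.funext
    intro c
    have h1 : Λ c q = ∑ i, f i • (c ^ dd i • m i) := by
      rw [← hq, ← LieHom.coe_toLinearMap, map_sum]
      simp only [map_smul, LieHom.coe_toLinearMap, hm]
    have h2 : ℓ (Λ c q) = c * ℓ q := by rw [hrel, map_smul, smul_eq_mul]
    rw [h1] at h2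
    rw [map_sum] at h2
    simp only [map_smul, smul_eq_mul] at h2
    rw [eval_finset_sum, eval_monomial]
    simp only [eval_monomial, pow_one]
    rw [mul_comm (ℓ q) c, ← h2]
    exact Finset.sum_congr rfl (fun i _ => by ring)
  have hco := congrArg (fun P : Polynomial K => P.coeff 1) hPeq
  simp only [finset_sum_coeff, coeff_monomial, if_pos] at hco
  have : ℓ (∑ i, (if dd i = 1 then f i else 0) • m i) = ℓ q := by
    rw [map_sum]
    rw [← hco]
    congr 1; funext i
    by_cases h : dd i = 1
    · simp [h, map_smul, smul_eq_mul]
    · simp [h]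
  rw [map_sub, this, sub_self]

lemma lie_xy_ne_zero : (⁅of K (0 : Fin 2), of K 1⁆ : LieW K) ≠ 0 := by
  intro hcon
  letI : LieRing (Matrix (Fin 2) (Fin 2) K) := LieRing.ofAssociativeRing
  let ρ : LieW K →ₗ⁅K⁆ Matrix (Fin 2) (Fin 2) K :=
    FreeLieAlgebra.lift K (fun i : Fin 2 =>
      if i = 0 then Matrix.single 0 1 1 else Matrix.single 1 0 1)
  have h1 : ρ (of K 0) = Matrix.single 0 1 1 := by
    rw [lift_of_apply]; simp [ρ]
  have h2 : ρ (of K 1) = Matrix.single 1 0 1 := by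
    rw [lift_of_apply]; simp [ρ]
  have h3 : ρ ⁅of K (0 : Fin 2), of K 1⁆ = 0 := by rw [hcon]; exact ρ.map_zero
  rw [LieHom.map_lie, h1, h2, Ring.lie_def, Matrix.single_mul_single_same,
    Matrix.single_mul_single_same] at h3
  have h4 := congrFun (congrFun h3 0) 0
  simp [Matrix.sub_apply, Matrix.single_apply_same,
    Matrix.single_apply_of_ne, Matrix.zero_apply] at h4

end Extract

/-- Over an infinite field, let `T` be a characteristic automorphism of the
endomorphism monoid of the free Lie algebra on generators `x, y` acting identically on the
`L`-endomorphisms, and for `p ∈ W` let `d p` be the endomorphism with `(d p) x = p`,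
`(d p) y = y`.  Then there is `λ ≠ 0` with `T (d p) = τ_λ⁻¹ ∘ d p ∘ τ_λ` for every `p`. -/
theorem characteristic_aut_on_dp_endos (K : Type*) [Field K] [Infinite K]
    (T : MulAut (LieEnd K)) (hT : IsCharacteristic T)
    (hid : ∀ σ : LieEnd K, IsLEndo σ → T σ = σ)
    (d : LieW K → LieEnd K)
    (hd : ∀ p : LieW K, d p = FreeLieAlgebra.lift K fun i : Fin 2 =>
      if i = 0 then p else FreeLieAlgebra.of K (1 : Fin 2)) :
    ∃ l : K, l ≠ 0 ∧ ∀ p : LieW K,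
      T (d p) = (lieTau K l⁻¹).comp ((d p).comp (lieTau K l)) := by
  classical
  have hdEE : ∀ p : LieW K, d p = EE p (of K 1) := fun p => by rw [hd p]; rfl
  have hfix : ∀ u v : LieW K, u ∈ VS K → v ∈ VS K → T (EE u v) = EE u v :=
    fun u v hu hv => hid _ (isLEndo_EE hu hv)
  set φ : LieW K → LieW K := fun p => T (d p) (of K 0) with hφ
  -- Step A : T (d p) = EE (φ p) y
  have hTd : ∀ p, T (d p) = EE (φ p) (of K 1) := by
    intro p
    have hyyL : T (EE (of K 1) (of K 1)) = EE (of K 1) (of K 1) :=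
      hfix _ _ y_mem_VS y_mem_VS
    have hcomp : d p * EE (of K 1) (of K 1) = EE (of K 1) (of K 1) := by
      apply endo_ext
      · rw [lieEnd_mul_apply, EE_apply_x, hdEE, EE_apply_y]
      · rw [lieEnd_mul_apply, EE_apply_y, hdEE, EE_apply_y]
    have h2 : T (d p) * EE (of K 1) (of K 1) = EE (of K 1) (of K 1) := by
      rw [← hyyL, ← map_mul, hcomp]
    have h3 : T (d p) (of K 1) = of K 1 := by
      have := congrArg (fun F : LieEnd K => F (of K 0)) h2
      simpa [lieEnd_mul_apply, EE_apply_x] using this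
    apply endo_ext
    · rw [EE_apply_x]
    · rw [EE_apply_y, h3]
  -- Step B : T acts coordinatewise by φ on every endomorphism
  have hTall : ∀ F : LieEnd K, T F = EE (φ (F (of K 0))) (φ (F (of K 1))) := by
    intro F
    have he0 : T (EE (of K 0) 0) = EE (of K 0) 0 :=
      hfix _ _ x_mem_VS (VS K).zero_mem
    have hc1 : F * EE (of K 0) 0 = d (F (of K 0)) * EE (of K 0) 0 := by
      apply endo_ext
      · rw [lieEnd_mul_apply, lieEnd_mul_apply, EE_apply_x, hdEE, EE_apply_x]
      · rw [lieEnd_mul_apply, lieEnd_mul_apply, EE_apply_y, map_zero F, map_zero (d _)]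
    have hx1 : T F (of K 0) = φ (F (of K 0)) := by
      have h2 : T F * EE (of K 0) 0 = EE (φ (F (of K 0))) (of K 1) * EE (of K 0) 0 := by
        rw [← he0, ← map_mul, hc1, map_mul, hTd, he0]
      have := congrArg (fun G : LieEnd K => G (of K 0)) h2
      simpa [lieEnd_mul_apply, EE_apply_x] using this
    have hyy : T (EE (of K 1) (of K 1)) = EE (of K 1) (of K 1) :=
      hfix _ _ y_mem_VS y_mem_VS
    have hxx : T (EE (of K 0) (of K 0)) = EE (of K 0) (of K 0) :=
      hfix _ _ x_mem_VS x_mem_VS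
    have hc2 : F * EE (of K 1) (of K 1) = d (F (of K 1)) * EE (of K 0) (of K 0) := by
      apply endo_ext
      · rw [lieEnd_mul_apply, lieEnd_mul_apply, EE_apply_x, EE_apply_x, hdEE, EE_apply_x]
      · rw [lieEnd_mul_apply, lieEnd_mul_apply, EE_apply_y, EE_apply_y, hdEE, EE_apply_x]
    have hy1 : T F (of K 1) = φ (F (of K 1)) := by
      have h2 : T F * EE (of K 1) (of K 1)
          = EE (φ (F (of K 1))) (of K 1) * EE (of K 0) (of K 0) := by
        rw [← hyy, ← map_mul, hc2, map_mul, hTd, hxx]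
      have := congrArg (fun G : LieEnd K => G (of K 0)) h2
      simpa [lieEnd_mul_apply, EE_apply_x, EE_apply_y] using this
    exact endo_ext (by rw [EE_apply_x]; exact hx1) (by rw [EE_apply_y]; exact hy1)
  have hTEE : ∀ u w : LieW K, T (EE u w) = EE (φ u) (φ w) := by
    intro u w
    have := hTall (EE u w)
    rwa [EE_apply_x, EE_apply_y] at this
  -- Step C : φ is linear
  have hadd : ∀ u w : LieW K, φ (u + w) = φ u + φ w := by
    intro u w
    have hNfix : T (EE (of K 0 + of K 1) (of K 1)) = EE (of K 0 + of K 1) (of K 1) :=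
      hfix _ _ (add_mem x_mem_VS y_mem_VS) y_mem_VS
    have hc : EE u w * EE (of K 0 + of K 1) (of K 1) = EE (u + w) w := by
      apply endo_ext
      · rw [lieEnd_mul_apply, EE_apply_x, map_add, EE_apply_x, EE_apply_y, EE_apply_x]
      · rw [lieEnd_mul_apply, EE_apply_y, EE_apply_y, EE_apply_y]
    have h2 : EE (φ (u + w)) (φ w)
        = EE (φ u) (φ w) * EE (of K 0 + of K 1) (of K 1) := by
      calc EE (φ (u + w)) (φ w) = T (EE (u + w) w) := (hTEE _ _).symm
        _ = T (EE u w * EE (of K 0 + of K 1) (of K 1)) := by rw [hc]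
        _ = T (EE u w) * T (EE (of K 0 + of K 1) (of K 1)) := map_mul T _ _
        _ = EE (φ u) (φ w) * EE (of K 0 + of K 1) (of K 1) := by rw [hTEE, hNfix]
    have := congrArg (fun G : LieEnd K => G (of K 0)) h2
    simpa [lieEnd_mul_apply, EE_apply_x, map_add, EE_apply_y] using this
  have hsmul : ∀ (c : K) (u : LieW K), φ (c • u) = c • φ u := by
    intro c u
    have hNcfix : T (EE (c • of K 0) (of K 1)) = EE (c • of K 0) (of K 1) :=
      hfix _ _ ((VS K).smul_mem c x_mem_VS) y_mem_VS
    have hc : EE u (of K 1) * EE (c • of K 0) (of K 1) = EE (c • u) (of K 1) := by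
      apply endo_ext
      · rw [lieEnd_mul_apply, EE_apply_x, map_smul, EE_apply_x, EE_apply_x]
      · rw [lieEnd_mul_apply, EE_apply_y, EE_apply_y, EE_apply_y]
    have h2 : EE (φ (c • u)) (φ (of K 1))
        = EE (φ u) (φ (of K 1)) * EE (c • of K 0) (of K 1) := by
      calc EE (φ (c • u)) (φ (of K 1)) = T (EE (c • u) (of K 1)) := (hTEE _ _).symm
        _ = T (EE u (of K 1) * EE (c • of K 0) (of K 1)) := by rw [hc]
        _ = T (EE u (of K 1)) * T (EE (c • of K 0) (of K 1)) := map_mul T _ _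
        _ = EE (φ u) (φ (of K 1)) * EE (c • of K 0) (of K 1) := by rw [hTEE, hNcfix]
    have := congrArg (fun G : LieEnd K => G (of K 0)) h2
    simpa [lieEnd_mul_apply, EE_apply_x, map_smul] using this
  have hx0 : φ (of K 0) = of K 0 := by
    have h1 : T (d (of K 0)) = d (of K 0) := by
      rw [hdEE]; exact hfix _ _ x_mem_VS y_mem_VS
    rw [hφ]
    show T (d (of K 0)) (of K 0) = of K 0
    rw [h1, hdEE, EE_apply_x]
  have hy0 : φ (of K 1) = of K 1 := by
    have h1 : T (d (of K 1)) = d (of K 1) := by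
      rw [hdEE]; exact hfix _ _ y_mem_VS y_mem_VS
    rw [hφ]
    show T (d (of K 1)) (of K 0) = of K 1
    rw [h1, hdEE, EE_apply_x]
  -- Step KEY : substitution equivariance
  have hkey : ∀ u w a : LieW K, φ (EE u w a) = EE (φ u) (φ w) (φ a) := by
    intro u w a
    have h2 : T (EE u w * d a) = EE (φ u) (φ w) * EE (φ a) (of K 1) := by
      rw [map_mul, hTEE, hTd]
    have h3 : (EE u w * d a) (of K 0) = EE u w a := by
      rw [lieEnd_mul_apply, hdEE, EE_apply_x]
    rw [hTall (EE u w * d a), h3] at h2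
    have := congrArg (fun G : LieEnd K => G (of K 0)) h2
    simpa [lieEnd_mul_apply, EE_apply_x] using this
  set q : LieW K := φ ⁅of K (0 : Fin 2), of K 1⁆ with hq
  have hbr : ∀ u w : LieW K, φ ⁅u, w⁆ = EE (φ u) (φ w) q := by
    intro u w
    have := hkey u w ⁅of K (0 : Fin 2), of K 1⁆
    rwa [EE_lie] at this
  have hΛx : ∀ c : K, EE (c • of K 0) (of K 1) q = c • q := by
    intro c
    have h1 := hbr (c • of K 0) (of K 1)
    rw [smul_lie, hsmul, ← hq] at h1
    rw [hsmul, hx0, hy0] at h1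
    exact h1.symm
  have hΛy : ∀ c : K, EE (of K 0) (c • of K 1) q = c • q := by
    intro c
    have h1 := hbr (of K 0) (c • of K 1)
    rw [lieW_lie_smul, hsmul, ← hq] at h1
    rw [hsmul, hx0, hy0] at h1
    exact h1.symm
  -- decompose q into monomials and extract the bidegree (1,1) part
  have hqmem : q ∈ Submodule.span K {w : LieW K | ∃ i j, Mono K w i j} := by
    rw [span_mono_top]; trivial
  obtain ⟨n, f, g, hsum⟩ := Submodule.mem_span_set'.mp hqmem
  choose dx dy hMono using fun i => (g i).2
  have h1 := extract_deg (fun c => EE (c • of K 0) (of K 1)) q f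
      (fun i => (g i : LieW K)) dx hsum (fun c i => mono_eval_x c (hMono i)) hΛx
  have h2 := extract_deg (fun c => EE (of K 0) (c • of K 1)) q
      (fun i => if dx i = 1 then f i else 0) (fun i => (g i : LieW K)) dy h1
      (fun c i => mono_eval_y c (hMono i)) hΛy
  have hqspan : q ∈ Submodule.span K ({⁅of K (0 : Fin 2), of K 1⁆} : Set (LieW K)) := by
    rw [← h2]
    apply Submodule.sum_mem
    intro i _
    by_cases hdy : dy i = 1
    · by_cases hdx : dx i = 1
      · rcases mono_11 (hMono i) hdx hdy with hm | hm
        · simp only [hdy, hdx, if_true]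
          rw [hm]
          exact Submodule.smul_mem _ _ (Submodule.mem_span_singleton_self _)
        · simp only [hdy, hdx, if_true]
          rw [hm]
          have hskew : (⁅of K (1 : Fin 2), of K 0⁆ : LieW K) = -⁅of K (0 : Fin 2), of K 1⁆ := by
            rw [← lie_skew]
          rw [hskew, smul_neg]
          exact neg_mem (Submodule.smul_mem _ _ (Submodule.mem_span_singleton_self _))
      · simp [hdx]
    · simp [hdy]
  obtain ⟨k, hk⟩ := Submodule.mem_span_singleton.mp hqspan
  -- φ is injective, hence k ≠ 0
  have hinj : Function.Injective φ := by
    intro a b hab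
    have h1 : T (d a) = T (d b) := by rw [hTd, hTd, hab]
    have h2 : d a = d b := T.injective h1
    have := congrArg (fun G : LieEnd K => G (of K 0)) h2
    simpa [hdEE, EE_apply_x] using this
  have hphi0 : φ 0 = 0 := by
    have := hsmul 0 0
    simpa using this
  have hkne : k ≠ 0 := by
    intro hk0
    rw [hk0, zero_smul] at hk
    have hcon : φ ⁅of K (0 : Fin 2), of K 1⁆ = φ 0 := by
      rw [← hq, ← hk, hphi0]
    exact lie_xy_ne_zero (hinj hcon)
  refine ⟨k⁻¹, inv_ne_zero hkne, ?_⟩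
  have hbrk : ∀ u w : LieW K, φ ⁅u, w⁆ = k • ⁅φ u, φ w⁆ := by
    intro u w
    rw [hbr u w, ← hk, map_smul, EE_lie]
  -- the normalized map is a Lie algebra endomorphism fixing the generators
  let θlin : LieW K →ₗ[K] LieW K :=
    { toFun := fun p => k • lieTau K k⁻¹ (φ p)
      map_add' := fun a b => by
        show k • lieTau K k⁻¹ (φ (a + b))
            = k • lieTau K k⁻¹ (φ a) + k • lieTau K k⁻¹ (φ b)
        rw [hadd, map_add, smul_add]
      map_smul' := fun c a => by
        show k • lieTau K k⁻¹ (φ (c • a)) = (RingHom.id K) c • (k • lieTau K k⁻¹ (φ a))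
        rw [hsmul, map_smul, RingHom.id_apply, smul_comm] }
  let θ : LieEnd K :=
    { θlin with
      map_lie' := by
        intro u w
        show k • lieTau K k⁻¹ (φ ⁅u, w⁆)
            = ⁅k • lieTau K k⁻¹ (φ u), k • lieTau K k⁻¹ (φ w)⁆
        rw [hbrk, map_smul, LieHom.map_lie, lieW_smul_lie_smul, smul_smul] }
  have hθid : θ = (LieHom.id : LieEnd K) := by
    apply endo_ext
    · show k • lieTau K k⁻¹ (φ (of K 0)) = of K (0 : Fin 2)
      rw [hx0, lieTau_of, smul_smul, mul_inv_cancel₀ hkne, one_smul]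
    · show k • lieTau K k⁻¹ (φ (of K 1)) = of K (1 : Fin 2)
      rw [hy0, lieTau_of, smul_smul, mul_inv_cancel₀ hkne, one_smul]
  have hφform : ∀ p, φ p = k⁻¹ • lieTau K k p := by
    intro p
    have h0 : k • lieTau K k⁻¹ (φ p) = p := by
      have h0' := congrArg (fun G : LieEnd K => G p) hθid
      exact h0'
    have h1 : lieTau K k (k • lieTau K k⁻¹ (φ p)) = lieTau K k p := by rw [h0]
    rw [map_smul, lieTau_tau, mul_inv_cancel₀ hkne, lieTau_one] at h1
    rw [← h1, smul_smul, inv_mul_cancel₀ hkne, one_smul]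
  intro p
  rw [hTd p]
  apply endo_ext
  · rw [EE_apply_x, LieHom.comp_apply, LieHom.comp_apply, lieTau_of, inv_inv,
      map_smul, hdEE, EE_apply_x, map_smul]
    exact hφform p
  · rw [EE_apply_y, LieHom.comp_apply, LieHom.comp_apply, lieTau_of, inv_inv,
      map_smul, hdEE, EE_apply_y, map_smul, lieTau_of, smul_smul,
      inv_mul_cancel₀ hkne, one_smul]
end
end
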